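/- arXiv:2404.04865 — 3 statements merged into one kernel-verified Lean document; each statement's English description precedes it below -/
import Mathlib

section
/- Let R be a separate ranking function space, i.e., for every x ∈ X there exists r_x ∈ R with r_x(x) < r_x(x') for all x' ∈ X ∖ {x}, and let X be finite. Then OOD detection is learnable under AUC in the separate space 𝒟^s for R if and only if the AUC-based Realizability Assumption holds: for every domain D_XY ∈ 𝒟^s there exists r* ∈ R with AUC(r*; D_{X_I}, D_{X_O}) = 1. -/
open MeasureTheory Filter Set
open scoped ENNReal NNReal

noncomputable section

namespace OODF

/-- A *domain*: a mixture `(1-π)·D_I + π·D_O` of an ID joint distribution `D_I` on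
`𝒳 × {1,…,K}` and an OOD joint distribution `D_O` on `𝒳 × {K+1}`, with class prior
`π ∈ [0,1)`.  Labels are encoded as naturals: ID labels are `{1,…,K}`, OOD label is `K+1`. -/
structure Domain (𝒳 : Type*) [MeasurableSpace 𝒳] (K : ℕ) where
  DI : Measure (𝒳 × ℕ)
  DO : Measure (𝒳 × ℕ)
  prior : ℝ
  probI : IsProbabilityMeasure DI
  probO : IsProbabilityMeasure DO
  suppI : DI {p | p.2 ∉ Set.Icc 1 K} = 0
  suppO : DO {p | p.2 ≠ K + 1} = 0
  prior_mem : prior ∈ Set.Ico (0 : ℝ) 1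

variable {𝒳 : Type*} [MeasurableSpace 𝒳] {K : ℕ}

namespace Domain

/-- the mixed joint distribution `D_XY = (1-π)·D_I + π·D_O` -/
def joint (D : Domain 𝒳 K) : Measure (𝒳 × ℕ) :=
  ENNReal.ofReal (1 - D.prior) • D.DI + ENNReal.ofReal D.prior • D.DO

/-- the marginal `D_{X_I}` of the ID joint distribution on the feature space -/
def margI (D : Domain 𝒳 K) : Measure 𝒳 := D.DI.map Prod.fst

/-- the marginal `D_{X_O}` of the OOD joint distribution on the feature space -/
def margO (D : Domain 𝒳 K) : Measure 𝒳 := D.DO.map Prod.fst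

/-- the domain `D^α = (1-α)·D_I + α·D_O`, i.e. `D` with its class prior replaced by `α` -/
def withPrior (D : Domain 𝒳 K) (α : Set.Ico (0 : ℝ) 1) : Domain 𝒳 K :=
  { D with prior := α.1, prior_mem := α.2 }

end Domain

/-- a prior-unknown domain space: closed under changing the class prior -/
def PriorUnknown (𝒟 : Set (Domain 𝒳 K)) : Prop :=
  ∀ D ∈ 𝒟, ∀ α : Set.Ico (0 : ℝ) 1, D.withPrior α ∈ 𝒟

/-- the risk `R_D(h)` w.r.t. the mixed joint distribution -/
def risk (ℓ : ℕ → ℕ → ℝ) (D : Domain 𝒳 K) (h : 𝒳 → ℕ) : ℝ :=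
  ∫ p, ℓ (h p.1) p.2 ∂D.joint

/-- the ID risk `R_D^in(h)` -/
def riskIn (ℓ : ℕ → ℕ → ℝ) (D : Domain 𝒳 K) (h : 𝒳 → ℕ) : ℝ :=
  ∫ p, ℓ (h p.1) p.2 ∂D.DI

/-- the OOD risk `R_D^out(h)` -/
def riskOut (ℓ : ℕ → ℕ → ℝ) (D : Domain 𝒳 K) (h : 𝒳 → ℕ) : ℝ :=
  ∫ p, ℓ (h p.1) (K + 1) ∂D.DO

/-- the `α`-risk `R_D^α(h) = (1-α)·R_D^in(h) + α·R_D^out(h)` -/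
def riskA (ℓ : ℕ → ℕ → ℝ) (D : Domain 𝒳 K) (h : 𝒳 → ℕ) (α : ℝ) : ℝ :=
  (1 - α) * riskIn ℓ D h + α * riskOut ℓ D h

/-- the distribution of an i.i.d. sample of size `n` from the ID joint distribution -/
def sampleMeasure (D : Domain 𝒳 K) (n : ℕ) : Measure (Fin n → 𝒳 × ℕ) :=
  letI := D.probI
  Measure.pi fun _ => D.DI

/-- An algorithm maps, for every sample size `n ≥ 1`, a labeled sample to a function on `𝒳`. -/
abbrev Algorithm (𝒳 β : Type*) := (n : ℕ) → (Fin n → 𝒳 × ℕ) → (𝒳 → β)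

/-- `A` is consistent w.r.t. `𝒟` under risk with rate `ε`: it outputs hypotheses in `H`,
the resulting risks are measurable in the sample, and the expected excess risk for samples
of size `n ≥ 1` is at most `ε n`. -/
def ConsistentRisk (ℓ : ℕ → ℕ → ℝ) (𝒟 : Set (Domain 𝒳 K)) (H : Set (𝒳 → ℕ))
    (A : Algorithm 𝒳 ℕ) (ε : ℕ → ℝ) : Prop :=
  (∀ n : ℕ, 1 ≤ n → ∀ S, A n S ∈ H) ∧
  (∀ D ∈ 𝒟, ∀ n : ℕ, 1 ≤ n → Measurable fun S : Fin n → 𝒳 × ℕ => risk ℓ D (A n S)) ∧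
  ∀ D ∈ 𝒟, ∀ n : ℕ, 1 ≤ n →
    ∫ S, (risk ℓ D (A n S) - ⨅ h : H, risk ℓ D h.1) ∂(sampleMeasure D n) ≤ ε n

/-- OOD detection is learnable under risk in `𝒟` for `H` with the given rate. -/
def LearnableRiskRate (ℓ : ℕ → ℕ → ℝ) (𝒟 : Set (Domain 𝒳 K)) (H : Set (𝒳 → ℕ))
    (ε : ℕ → ℝ) : Prop :=
  ∃ A, ConsistentRisk ℓ 𝒟 H A ε

/-- learnability of OOD detection under risk -/
def LearnableRisk (ℓ : ℕ → ℕ → ℝ) (𝒟 : Set (Domain 𝒳 K)) (H : Set (𝒳 → ℕ)) : Prop :=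
  ∃ ε : ℕ → ℝ, Antitone ε ∧ Tendsto ε atTop (nhds 0) ∧ LearnableRiskRate ℓ 𝒟 H ε

/-- `A` is strongly consistent: the expected excess `α`-risks are uniformly small over
all `α ∈ [0,1]`. -/
def StrongConsistentRisk (ℓ : ℕ → ℕ → ℝ) (𝒟 : Set (Domain 𝒳 K)) (H : Set (𝒳 → ℕ))
    (A : Algorithm 𝒳 ℕ) (ε : ℕ → ℝ) : Prop :=
  (∀ n : ℕ, 1 ≤ n → ∀ S, A n S ∈ H) ∧
  (∀ D ∈ 𝒟, ∀ n : ℕ, 1 ≤ n → ∀ α : ℝ,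
    Measurable fun S : Fin n → 𝒳 × ℕ => riskA ℓ D (A n S) α) ∧
  ∀ D ∈ 𝒟, ∀ n : ℕ, 1 ≤ n → ∀ α ∈ Set.Icc (0 : ℝ) 1,
    ∫ S, (riskA ℓ D (A n S) α - ⨅ h : H, riskA ℓ D h.1 α) ∂(sampleMeasure D n) ≤ ε n

/-- strong learnability of OOD detection under risk -/
def StrongLearnableRisk (ℓ : ℕ → ℕ → ℝ) (𝒟 : Set (Domain 𝒳 K)) (H : Set (𝒳 → ℕ)) : Prop :=
  ∃ ε : ℕ → ℝ, Antitone ε ∧ Tendsto ε atTop (nhds 0) ∧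
    ∃ A, StrongConsistentRisk ℓ 𝒟 H A ε

/-- the AUC of a ranking function `r` w.r.t. ID marginal `P` and OOD marginal `Q`:
`AUC(r) = E_{x ~ P} E_{x' ~ Q} [1_{r(x) > r(x')} + (1/2)·1_{r(x) = r(x')}]` -/
def AUC (r : 𝒳 → ℝ) (P Q : Measure 𝒳) : ℝ :=
  ∫ x, (∫ x', ((if r x' < r x then (1 : ℝ) else 0) +
      (1 / 2) * (if r x = r x' then (1 : ℝ) else 0)) ∂Q) ∂P

/-- `A` is AUC-consistent w.r.t. `𝒟` with rate `ε`. -/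
def ConsistentAUC (𝒟 : Set (Domain 𝒳 K)) (R : Set (𝒳 → ℝ))
    (A : Algorithm 𝒳 ℝ) (ε : ℕ → ℝ) : Prop :=
  (∀ n : ℕ, 1 ≤ n → ∀ S, A n S ∈ R) ∧
  (∀ D ∈ 𝒟, ∀ n : ℕ, 1 ≤ n →
    Measurable fun S : Fin n → 𝒳 × ℕ => AUC (A n S) D.margI D.margO) ∧
  ∀ D ∈ 𝒟, ∀ n : ℕ, 1 ≤ n →
    ∫ S, ((⨆ r : R, AUC r.1 D.margI D.margO) - AUC (A n S) D.margI D.margO)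
      ∂(sampleMeasure D n) ≤ ε n

/-- OOD detection is learnable under AUC in `𝒟` for `R` with the given rate. -/
def LearnableAUCRate (𝒟 : Set (Domain 𝒳 K)) (R : Set (𝒳 → ℝ)) (ε : ℕ → ℝ) : Prop :=
  ∃ A, ConsistentAUC 𝒟 R A ε

/-- learnability of OOD detection under AUC -/
def LearnableAUC (𝒟 : Set (Domain 𝒳 K)) (R : Set (𝒳 → ℝ)) : Prop :=
  ∃ ε : ℕ → ℝ, Antitone ε ∧ Tendsto ε atTop (nhds 0) ∧ LearnableAUCRate 𝒟 R ε

/-- the (topological) support of a measure -/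
def mSupport {α : Type*} [TopologicalSpace α] [MeasurableSpace α] (μ : Measure α) : Set α :=
  {x | ∀ U ∈ nhds x, 0 < μ U}

/-- the separate space `𝒟^s`: all domains whose ID and OOD marginals have disjoint supports -/
def separateSpace (𝒳 : Type*) [MeasurableSpace 𝒳] [TopologicalSpace 𝒳] (K : ℕ) :
    Set (Domain 𝒳 K) :=
  {D | mSupport D.margO ∩ mSupport D.margI = ∅}

/-- a class `G` of binary functions (encoded as predicates) shatters the finite set `C` -/
def Shatters {α : Type*} (G : Set (α → Prop)) (C : Finset α) : Prop :=
  ∀ f : α → Prop, ∃ g ∈ G, ∀ x ∈ C, g x ↔ f x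

/-- the VC dimension of a class of binary functions (encoded as predicates) -/
def VCdim {α : Type*} (G : Set (α → Prop)) : ℕ∞ :=
  sSup {n : ℕ∞ | ∃ C : Finset α, Shatters G C ∧ n = (C.card : ℕ∞)}



section Aux
open scoped Classical
set_option linter.unusedSectionVars false

variable {α : Type*} [MeasurableSpace α] [MeasurableSingletonClass α]

lemma allMeasurable [Countable α] (s : Set α) : MeasurableSet s :=
  (Set.to_countable s).measurableSet

lemma meas_eq_sum [Fintype α] (μ : Measure α) (A : Set α) :
    μ A = ∑ x ∈ A.toFinite.toFinset, μ {x} := by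
  conv_lhs => rw [show A = ⋃ x ∈ A.toFinite.toFinset, {x} by ext y; simp]
  rw [measure_biUnion_finset ?_ (fun b _ => measurableSet_singleton b)]
  intro x _ y _ hxy
  simp [Set.disjoint_singleton, hxy]

lemma meas_zero_of_singletons [Fintype α] (μ : Measure α) (A : Set α)
    (h : ∀ x ∈ A, μ {x} = 0) : μ A = 0 := by
  rw [meas_eq_sum μ A]
  exact Finset.sum_eq_zero fun x hx => h x (by simpa using hx)

lemma toReal_meas_eq_sum [Fintype α] (μ : Measure α) [IsFiniteMeasure μ] (A : Set α) :
    (μ A).toReal = ∑ x : α, (if x ∈ A then (μ {x}).toReal else 0) := by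
  rw [meas_eq_sum μ A, ENNReal.toReal_sum (fun x _ => measure_ne_top μ _)]
  rw [← Finset.sum_filter]
  apply Finset.sum_congr _ (fun _ _ => rfl)
  ext x; simp

lemma sum_toReal_singleton [Fintype α] (μ : Measure α) [IsProbabilityMeasure μ] :
    ∑ x : α, (μ {x}).toReal = 1 := by
  have := toReal_meas_eq_sum μ (Set.univ : Set α)
  simpa using this.symm

lemma mSupport_eq {β : Type*} [TopologicalSpace β] [DiscreteTopology β] [MeasurableSpace β]
    (μ : Measure β) : mSupport μ = {x | 0 < μ {x}} := by
  ext x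
  constructor
  · intro h; exact h {x} (by simp [nhds_discrete, Filter.mem_pure])
  · intro h U hU
    have hxU : x ∈ U := mem_of_mem_nhds hU
    exact lt_of_lt_of_le h (measure_mono (by simpa using hxU))


def gfun (r : α → ℝ) (x x' : α) : ℝ :=
  (if r x' < r x then (1 : ℝ) else 0) + (1 / 2) * (if r x = r x' then (1 : ℝ) else 0)

lemma gfun_nonneg (r : α → ℝ) (x x' : α) : 0 ≤ gfun r x x' := by
  unfold gfun; split_ifs <;> norm_num

lemma gfun_le_one (r : α → ℝ) (x x' : α) : gfun r x x' ≤ 1 := by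
  by_cases h1 : r x' < r x
  · have h2 : r x ≠ r x' := ne_of_gt h1
    simp [gfun, h1, h2]
  · by_cases h2 : r x = r x' <;> simp [gfun, h1, h2] <;> norm_num

lemma gfun_eq_one_iff (r : α → ℝ) (x x' : α) : gfun r x x' = 1 ↔ r x' < r x := by
  by_cases h1 : r x' < r x
  · have h2 : r x ≠ r x' := ne_of_gt h1
    simp [gfun, h1, h2]
  · by_cases h2 : r x = r x' <;> simp [gfun, h1, h2] <;> norm_num

variable [Fintype α] (r : α → ℝ) (P Q : Measure α)

lemma AUC_eq_sum [IsFiniteMeasure P] [IsFiniteMeasure Q] :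
    AUC r P Q = ∑ x : α, (P {x}).toReal * ∑ x' : α, (Q {x'}).toReal * gfun r x x' := by
  unfold AUC
  rw [integral_fintype Integrable.of_finite]
  refine Finset.sum_congr rfl fun x _ => ?_
  rw [integral_fintype Integrable.of_finite]
  simp [smul_eq_mul, gfun, Finset.mul_sum, measureReal_def]

variable [IsProbabilityMeasure P] [IsProbabilityMeasure Q]

lemma AUC_nonneg : 0 ≤ AUC r P Q := by
  rw [AUC_eq_sum]
  refine Finset.sum_nonneg fun x _ => mul_nonneg ENNReal.toReal_nonneg ?_
  exact Finset.sum_nonneg fun x' _ =>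
    mul_nonneg ENNReal.toReal_nonneg (gfun_nonneg r x x')

lemma AUC_le_one : AUC r P Q ≤ 1 := by
  rw [AUC_eq_sum]
  calc ∑ x : α, (P {x}).toReal * ∑ x' : α, (Q {x'}).toReal * gfun r x x'
      ≤ ∑ x : α, (P {x}).toReal * 1 := by
        refine Finset.sum_le_sum fun x _ => mul_le_mul_of_nonneg_left ?_ ENNReal.toReal_nonneg
        calc ∑ x' : α, (Q {x'}).toReal * gfun r x x'
            ≤ ∑ x' : α, (Q {x'}).toReal * 1 := Finset.sum_le_sum fun x' _ =>
              mul_le_mul_of_nonneg_left (gfun_le_one r x x') ENNReal.toReal_nonneg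
          _ = 1 := by simp [sum_toReal_singleton Q]
    _ = 1 := by simp [sum_toReal_singleton P]

lemma one_sub_AUC :
    1 - AUC r P Q
      = ∑ x : α, ∑ x' : α, (P {x}).toReal * ((Q {x'}).toReal * (1 - gfun r x x')) := by
  have key : ∀ x : α, ∑ x' : α, (P {x}).toReal * ((Q {x'}).toReal * (1 - gfun r x x'))
      = (P {x}).toReal - (P {x}).toReal * ∑ x' : α, (Q {x'}).toReal * gfun r x x' := by
    intro x
    calc ∑ x' : α, (P {x}).toReal * ((Q {x'}).toReal * (1 - gfun r x x'))
        = ∑ x' : α, ((P {x}).toReal * (Q {x'}).toReal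
            - (P {x}).toReal * ((Q {x'}).toReal * gfun r x x')) :=
          Finset.sum_congr rfl fun x' _ => by ring
      _ = (P {x}).toReal * (∑ x' : α, (Q {x'}).toReal)
            - (P {x}).toReal * ∑ x' : α, (Q {x'}).toReal * gfun r x x' := by
          rw [Finset.sum_sub_distrib, ← Finset.mul_sum, ← Finset.mul_sum]
      _ = (P {x}).toReal - (P {x}).toReal * ∑ x' : α, (Q {x'}).toReal * gfun r x x' := by
          rw [sum_toReal_singleton Q, mul_one]
  rw [AUC_eq_sum]
  rw [Finset.sum_congr rfl fun x _ => key x, Finset.sum_sub_distrib,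
    sum_toReal_singleton P]

lemma AUC_eq_one_lt {x y : α} (h : AUC r P Q = 1) (hx : 0 < P {x}) (hy : 0 < Q {y}) :
    r y < r x := by
  have h0 : ∑ x : α, ∑ x' : α, (P {x}).toReal * ((Q {x'}).toReal * (1 - gfun r x x')) = 0 := by
    rw [← one_sub_AUC r P Q, h]; ring
  have hnn : ∀ a ∈ Finset.univ, (0:ℝ) ≤
      ∑ x' : α, (P {a}).toReal * ((Q {x'}).toReal * (1 - gfun r a x')) := by
    intro a _
    refine Finset.sum_nonneg fun x' _ => mul_nonneg ENNReal.toReal_nonneg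
      (mul_nonneg ENNReal.toReal_nonneg (by linarith [gfun_le_one r a x']))
  have hx0 := (Finset.sum_eq_zero_iff_of_nonneg hnn).1 h0 x (Finset.mem_univ x)
  have hnn' : ∀ a ∈ Finset.univ, (0:ℝ) ≤ (P {x}).toReal * ((Q {a}).toReal * (1 - gfun r x a)) :=
    fun a _ => mul_nonneg ENNReal.toReal_nonneg
      (mul_nonneg ENNReal.toReal_nonneg (by linarith [gfun_le_one r x a]))
  have hxy := (Finset.sum_eq_zero_iff_of_nonneg hnn').1 hx0 y (Finset.mem_univ y)
  have hPx : 0 < (P {x}).toReal := ENNReal.toReal_pos hx.ne' (measure_ne_top P _)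
  have hQy : 0 < (Q {y}).toReal := ENNReal.toReal_pos hy.ne' (measure_ne_top Q _)
  have hg : 1 - gfun r x y = 0 := by
    rcases mul_eq_zero.1 hxy with h' | h'
    · exact absurd h' hPx.ne'
    rcases mul_eq_zero.1 h' with h'' | h''
    · exact absurd h'' hQy.ne'
    · exact h''
  exact (gfun_eq_one_iff r x y).1 (by linarith)

lemma AUC_eq_one_of (h : ∀ x y : α, 0 < P {x} → 0 < Q {y} → r y < r x) :
    AUC r P Q = 1 := by
  rw [AUC_eq_sum]
  have key : ∀ x : α, (P {x}).toReal * (∑ x' : α, (Q {x'}).toReal * gfun r x x')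
      = (P {x}).toReal * 1 := by
    intro x
    rcases eq_or_lt_of_le (zero_le : 0 ≤ P {x}) with hPx | hPx
    · simp [show P {x} = 0 from hPx.symm]
    congr 1
    rw [← sum_toReal_singleton Q]
    refine Finset.sum_congr rfl fun x' _ => ?_
    rcases eq_or_lt_of_le (zero_le : 0 ≤ Q {x'}) with hQx | hQx
    · simp [show Q {x'} = 0 from hQx.symm]
    · rw [(gfun_eq_one_iff r x x').2 (h x x' hPx hQx), mul_one]
  calc ∑ x : α, (P {x}).toReal * ∑ x' : α, (Q {x'}).toReal * gfun r x x'
      = ∑ x : α, (P {x}).toReal * 1 := Finset.sum_congr rfl fun x _ => key x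
    _ = 1 := by rw [← Finset.sum_mul, sum_toReal_singleton P, one_mul]

lemma one_sub_AUC_le (F : Set α) (h : ∀ x ∈ F, ∀ x' ∉ F, r x' < r x) :
    1 - AUC r P Q ≤ (P Fᶜ).toReal + (Q F).toReal := by
  rw [one_sub_AUC]
  have term_le : ∀ x x' : α, (P {x}).toReal * ((Q {x'}).toReal * (1 - gfun r x x'))
      ≤ (P {x}).toReal * (Q {x'}).toReal := by
    intro x x'
    refine mul_le_mul_of_nonneg_left ?_ ENNReal.toReal_nonneg
    have h1 : 1 - gfun r x x' ≤ 1 := by linarith [gfun_nonneg r x x']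
    calc (Q {x'}).toReal * (1 - gfun r x x') ≤ (Q {x'}).toReal * 1 :=
        mul_le_mul_of_nonneg_left h1 ENNReal.toReal_nonneg
      _ = (Q {x'}).toReal := mul_one _
  have hbound : ∀ x x' : α, (P {x}).toReal * ((Q {x'}).toReal * (1 - gfun r x x'))
      ≤ (if x ∈ Fᶜ then (P {x}).toReal else 0) * (Q {x'}).toReal
        + (P {x}).toReal * (if x' ∈ F then (Q {x'}).toReal else 0) := by
    intro x x'
    by_cases hx : x ∈ F
    · by_cases hx' : x' ∈ F
      · simp only [if_pos hx', mem_compl_iff, hx, not_true_eq_false, if_false, zero_mul, zero_add]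
        exact term_le x x'
      · have hg : gfun r x x' = 1 := (gfun_eq_one_iff r x x').2 (h x hx x' hx')
        rw [hg]
        simp only [sub_self, mul_zero]
        have : (0:ℝ) ≤ (if x ∈ Fᶜ then (P {x}).toReal else 0) * (Q {x'}).toReal := by
          split_ifs <;> positivity
        have h2 : (0:ℝ) ≤ (P {x}).toReal * (if x' ∈ F then (Q {x'}).toReal else 0) := by
          split_ifs <;> positivity
        linarith
    · simp only [mem_compl_iff, hx, not_false_eq_true, if_true]
      have h2 : (0:ℝ) ≤ (P {x}).toReal * (if x' ∈ F then (Q {x'}).toReal else 0) := by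
        split_ifs <;> positivity
      linarith [term_le x x']
  calc ∑ x : α, ∑ x' : α, (P {x}).toReal * ((Q {x'}).toReal * (1 - gfun r x x'))
      ≤ ∑ x : α, ∑ x' : α, ((if x ∈ Fᶜ then (P {x}).toReal else 0) * (Q {x'}).toReal
        + (P {x}).toReal * (if x' ∈ F then (Q {x'}).toReal else 0)) :=
        Finset.sum_le_sum fun x _ => Finset.sum_le_sum fun x' _ => hbound x x'
    _ = ∑ x : α, ((if x ∈ Fᶜ then (P {x}).toReal else 0) * (∑ x' : α, (Q {x'}).toReal)
        + (P {x}).toReal * (∑ x' : α, (if x' ∈ F then (Q {x'}).toReal else 0))) := by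
        refine Finset.sum_congr rfl fun x _ => ?_
        rw [Finset.sum_add_distrib, ← Finset.mul_sum, ← Finset.mul_sum]
    _ = (∑ x : α, (if x ∈ Fᶜ then (P {x}).toReal else 0))
        + (∑ x : α, (P {x}).toReal) * (∑ x' : α, (if x' ∈ F then (Q {x'}).toReal else 0)) := by
        rw [Finset.sum_add_distrib]
        congr 1
        · refine Finset.sum_congr rfl fun x _ => ?_
          rw [sum_toReal_singleton Q, mul_one]
        · exact (Finset.sum_mul _ _ _).symm
    _ = (P Fᶜ).toReal + (Q F).toReal := by
        rw [sum_toReal_singleton P, one_mul, ← toReal_meas_eq_sum Q F]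
        congr 1
        exact ((toReal_meas_eq_sum P Fᶜ).trans (Finset.sum_congr rfl fun x _ => by congr)).symm


lemma bddAbove_AUC (R : Set (α → ℝ)) :
    BddAbove (Set.range fun r : R => AUC r.1 P Q) := by
  refine ⟨1, ?_⟩
  rintro y ⟨r, rfl⟩
  exact AUC_le_one r.1 P Q

lemma ciSup_AUC_eq_one {R : Set (α → ℝ)} {r : α → ℝ} (hr : r ∈ R) (h1 : AUC r P Q = 1) :
    (⨆ r : R, AUC r.1 P Q) = 1 := by
  haveI : Nonempty R := ⟨⟨r, hr⟩⟩
  refine le_antisymm (ciSup_le fun r' => AUC_le_one r'.1 P Q) ?_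
  exact h1 ▸ le_ciSup (bddAbove_AUC P Q R) (⟨r, hr⟩ : R)

/-- the AUC functional has finite image on any set of ranking functions -/
lemma finite_AUC_image (R : Set (α → ℝ)) : ((fun r => AUC r P Q) '' R).Finite := by
  classical
  have hfac : ∀ r : α → ℝ, AUC r P Q =
      (fun f : α × α → ℝ => ∑ x : α, (P {x}).toReal * ∑ x' : α, (Q {x'}).toReal * f (x, x'))
        (fun p => gfun r p.1 p.2) := fun r => AUC_eq_sum r P Q
  have himg : (fun r => AUC r P Q) '' R ⊆
      (fun f : α × α → ℝ => ∑ x : α, (P {x}).toReal * ∑ x' : α, (Q {x'}).toReal * f (x, x')) ''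
        ((fun (f : α × α → Fin 3) (p : α × α) => ((f p : ℕ) : ℝ) / 2) '' Set.univ) := by
    rintro y ⟨r, _, rfl⟩
    refine ⟨fun p => gfun r p.1 p.2, ⟨fun p => if r p.2 < r p.1 then 2 else
      if r p.1 = r p.2 then 1 else 0, Set.mem_univ _, ?_⟩, (hfac r).symm⟩
    funext p
    by_cases h1 : r p.2 < r p.1
    · have h2 : r p.1 ≠ r p.2 := ne_of_gt h1
      simp [gfun, h1, h2]
    · by_cases h2 : r p.1 = r p.2 <;> simp [gfun, h1, h2] <;> norm_num
  exact ((Set.finite_univ.image _).image _).subset himg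

lemma exists_max_AUC {R : Set (α → ℝ)} (hR : R.Nonempty) :
    ∃ r₀ ∈ R, ∀ r ∈ R, AUC r P Q ≤ AUC r₀ P Q := by
  obtain ⟨a, ha, hmax⟩ := Set.Finite.exists_maximalFor id _ (finite_AUC_image P Q R)
    (hR.image _)
  obtain ⟨r₀, hr₀, rfl⟩ := ha
  refine ⟨r₀, hr₀, fun r hr => ?_⟩
  rcases le_or_gt (AUC r P Q) (AUC r₀ P Q) with h | h
  · exact h
  · have := hmax (Set.mem_image_of_mem (fun r => AUC r P Q) hr) h.le
    simp only [id] at this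
    exact this

lemma ciSup_le_max {R : Set (α → ℝ)} {r₀ : α → ℝ} (hr₀ : r₀ ∈ R)
    (hmax : ∀ r ∈ R, AUC r P Q ≤ AUC r₀ P Q) :
    (⨆ r : R, AUC r.1 P Q) ≤ AUC r₀ P Q := by
  haveI : Nonempty R := ⟨⟨r₀, hr₀⟩⟩
  exact ciSup_le fun r => hmax r.1 r.2

variable {K : ℕ}

instance msc_pi {β : Type*} [MeasurableSpace β] [MeasurableSingletonClass β] (n : ℕ) :
    MeasurableSingletonClass (Fin n → β) := by infer_instance

/-- the uniform probability measure on a finite set -/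
def unif (F : Set α) : Measure α :=
  (F.toFinite.toFinset.card : ℝ≥0∞)⁻¹ • ∑ x ∈ F.toFinite.toFinset, Measure.dirac x

lemma unif_singleton (F : Set α) (y : α) :
    unif F {y} = (F.toFinite.toFinset.card : ℝ≥0∞)⁻¹ * (if y ∈ F then 1 else 0) := by
  unfold unif
  rw [Measure.smul_apply, Measure.coe_finset_sum]
  simp only [smul_eq_mul, Finset.sum_apply]
  congr 1
  calc ∑ x ∈ F.toFinite.toFinset, Measure.dirac x {y}
      = ∑ x ∈ F.toFinite.toFinset, (if x = y then (1:ℝ≥0∞) else 0) := by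
        refine Finset.sum_congr rfl fun x _ => ?_
        rw [Measure.dirac_apply]
        simp [Set.indicator_apply]
    _ = if y ∈ F.toFinite.toFinset then 1 else 0 := Finset.sum_ite_eq' _ _ _
    _ = if y ∈ F then 1 else 0 := if_congr (Set.Finite.mem_toFinset _) rfl rfl
instance unif_prob (F : Set α) [hne : Nonempty F] : IsProbabilityMeasure (unif F) := by
  constructor
  unfold unif
  rw [Measure.smul_apply, Measure.coe_finset_sum]
  simp only [smul_eq_mul, Finset.sum_apply]
  have : ∑ x ∈ F.toFinite.toFinset, Measure.dirac x Set.univ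
      = (F.toFinite.toFinset.card : ℝ≥0∞) := by
    rw [Finset.sum_congr rfl fun x _ => (by simp : Measure.dirac x (Set.univ) = 1)]
    simp
  rw [this, ENNReal.inv_mul_cancel]
  · simp only [ne_eq, Nat.cast_eq_zero, Finset.card_eq_zero]
    intro h
    obtain ⟨x⟩ := hne
    have hx : (x : α) ∈ F.toFinite.toFinset := (Set.Finite.mem_toFinset _).2 x.2
    rw [h] at hx
    exact absurd hx (Finset.notMem_empty _)
  · exact ENNReal.natCast_ne_top _

lemma unif_pos_iff (F : Set α) (y : α) : 0 < unif F {y} ↔ y ∈ F := by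
  rw [unif_singleton]
  by_cases hy : y ∈ F
  · simp only [hy, if_true, mul_one, iff_true]
    refine ENNReal.inv_pos.2 (ENNReal.natCast_ne_top _)
  · simp [hy]

lemma measurable_pair_const (c : ℕ) : Measurable (fun x : α => (x, c)) :=
  measurable_id.prodMk measurable_const

/-- the auxiliary domain with ID uniform on `F` and OOD uniform on `Fᶜ` -/
def domF {K : ℕ} (hK : 1 ≤ K) (F : Set α) (hF : F.Nonempty) (hFc : Fᶜ.Nonempty) :
    Domain α K where
  DI := (unif F).map (fun x => (x, 1))
  DO := (unif Fᶜ).map (fun x => (x, K + 1))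
  prior := 0
  probI := by
    haveI : Nonempty F := hF.to_subtype
    exact Measure.isProbabilityMeasure_map (measurable_pair_const 1).aemeasurable
  probO := by
    haveI : Nonempty ↥(Fᶜ) := hFc.to_subtype
    exact Measure.isProbabilityMeasure_map (measurable_pair_const (K + 1)).aemeasurable
  suppI := by
    rw [Measure.map_apply (measurable_pair_const 1) (allMeasurable _)]
    have : (fun x : α => (x, 1)) ⁻¹' {p : α × ℕ | p.2 ∉ Set.Icc 1 K} = ∅ := by
      ext x; simp; omega
    rw [this, measure_empty]
  suppO := by
    rw [Measure.map_apply (measurable_pair_const (K + 1)) (allMeasurable _)]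
    have : (fun x : α => (x, K + 1)) ⁻¹' {p : α × ℕ | p.2 ≠ K + 1} = ∅ := by
      ext x; simp
    rw [this, measure_empty]
  prior_mem := ⟨le_refl 0, zero_lt_one⟩

lemma domF_margI {K : ℕ} (hK : 1 ≤ K) (F : Set α) (hF : F.Nonempty) (hFc : Fᶜ.Nonempty) :
    (domF hK F hF hFc).margI = unif F := by
  unfold Domain.margI domF
  rw [Measure.map_map measurable_fst (measurable_pair_const 1)]
  simp [Function.comp_def]

lemma domF_margO {K : ℕ} (hK : 1 ≤ K) (F : Set α) (hF : F.Nonempty) (hFc : Fᶜ.Nonempty) :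
    (domF hK F hF hFc).margO = unif Fᶜ := by
  unfold Domain.margO domF
  rw [Measure.map_map measurable_fst (measurable_pair_const (K + 1))]
  simp [Function.comp_def]

variable [TopologicalSpace α] [DiscreteTopology α]

lemma domF_mem_sep {K : ℕ} (hK : 1 ≤ K) (F : Set α) (hF : F.Nonempty) (hFc : Fᶜ.Nonempty) :
    domF hK F hF hFc ∈ separateSpace α K := by
  show mSupport _ ∩ mSupport _ = ∅
  rw [domF_margI, domF_margO, mSupport_eq, mSupport_eq]
  ext x
  simp only [Set.mem_inter_iff, Set.mem_setOf_eq, Set.mem_empty_iff_false, iff_false, not_and]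
  intro hO hI
  exact ((unif_pos_iff Fᶜ x).1 hO) ((unif_pos_iff F x).1 hI)

/-- realizability gives, for every nonempty proper `F`, a ranking function separating `F`
from its complement -/
lemma exists_separating_rank {K : ℕ} (R : Set (α → ℝ))
    (hreal : ∀ D ∈ separateSpace α K, ∃ r ∈ R, AUC r D.margI D.margO = 1)
    (hK : 1 ≤ K) (F : Set α) (hF : F.Nonempty) (hFc : Fᶜ.Nonempty) :
    ∃ r ∈ R, ∀ x ∈ F, ∀ x' ∉ F, r x' < r x := by
  obtain ⟨r, hrR, hr1⟩ := hreal (domF hK F hF hFc) (domF_mem_sep hK F hF hFc)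
  rw [domF_margI, domF_margO] at hr1
  haveI : Nonempty F := hF.to_subtype
  haveI : Nonempty ↥(Fᶜ) := hFc.to_subtype
  refine ⟨r, hrR, fun x hx x' hx' => ?_⟩
  exact AUC_eq_one_lt r (unif F) (unif Fᶜ) hr1 ((unif_pos_iff F x).2 hx)
    ((unif_pos_iff Fᶜ x').2 hx')


lemma real_bound (p : ℝ) (hp0 : 0 ≤ p) (hp1 : p ≤ 1) (n : ℕ) :
    p * (1 - p) ^ n ≤ 1 / (n + 1) := by
  have h1 : (1 : ℝ) + n * p ≤ (1 + p) ^ n := one_add_mul_le_pow (by linarith) n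
  have h2 : (1 - p) ^ n * (1 + p) ^ n ≤ 1 := by
    rw [← mul_pow]
    refine pow_le_one₀ (by nlinarith) (by nlinarith)
  have h3 : (0:ℝ) ≤ (1 - p) ^ n := pow_nonneg (by linarith) n
  have h4 : (1 - p) ^ n * (1 + n * p) ≤ 1 :=
    le_trans (mul_le_mul_of_nonneg_left h1 h3) h2
  have h5 : p * (1 - p) ^ n * (n + 1) ≤ (1 - p) ^ n * (1 + n * p) := by
    have : p * (n + 1) ≤ 1 + n * p := by nlinarith
    nlinarith
  have hn : (0:ℝ) < n + 1 := by positivity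
  rw [le_div_iff₀ hn]
  linarith

section Sample

variable {K : ℕ} (D : Domain α K)

lemma sample_prob (n : ℕ) : IsProbabilityMeasure (sampleMeasure D n) := by
  haveI := D.probI
  unfold sampleMeasure
  infer_instance

lemma sample_cylinder (n : ℕ) (i : Fin n) (B : Set (α × ℕ)) :
    sampleMeasure D n {S | S i ∈ B} = D.DI B := by
  haveI := D.probI
  have hs : {S : Fin n → α × ℕ | S i ∈ B} = Set.pi Set.univ (fun j => if j = i then B else Set.univ) := by
    ext S
    simp only [Set.mem_setOf_eq, Set.mem_univ_pi]
    constructor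
    · intro h j
      by_cases hj : j = i
      · subst hj; simpa using h
      · simp [hj]
    · intro h
      have := h i
      simpa using this
  rw [hs]
  show (Measure.pi fun _ => D.DI) _ = _
  rw [Measure.pi_pi]
  have : ∀ j : Fin n, D.DI (if j = i then B else Set.univ) = if j = i then D.DI B else 1 := by
    intro j; split_ifs <;> simp
  rw [Finset.prod_congr rfl fun j _ => this j, Finset.prod_ite_eq' Finset.univ i (fun _ => D.DI B)]
  simp

lemma sample_miss (n : ℕ) (x : α) :
    sampleMeasure D n {S | ∀ i, (S i).1 ≠ x} = (D.DI {p | p.1 ≠ x}) ^ n := by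
  haveI := D.probI
  have hs : {S : Fin n → α × ℕ | ∀ i, (S i).1 ≠ x}
      = Set.pi Set.univ (fun _ : Fin n => {p : α × ℕ | p.1 ≠ x}) := by
    ext S; simp [Set.mem_univ_pi]
  rw [hs]
  show (Measure.pi fun _ => D.DI) _ = _
  rw [Measure.pi_pi, Finset.prod_const, Finset.card_univ, Fintype.card_fin]

lemma DI_fst_ne (x : α) : D.DI {p | p.1 ≠ x} = 1 - D.margI {x} := by
  haveI := D.probI
  have h1 : {p : α × ℕ | p.1 ≠ x} = Prod.fst ⁻¹' ({x}ᶜ) := rfl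
  rw [h1, ← Measure.map_apply measurable_fst (measurableSet_singleton x).compl]
  show D.margI {x}ᶜ = _
  haveI : IsProbabilityMeasure D.margI :=
    Measure.isProbabilityMeasure_map measurable_fst.aemeasurable
  rw [prob_compl_eq_one_sub (measurableSet_singleton x)]

lemma margI_prob : IsProbabilityMeasure D.margI := by
  haveI := D.probI
  exact Measure.isProbabilityMeasure_map measurable_fst.aemeasurable

lemma margO_prob : IsProbabilityMeasure D.margO := by
  haveI := D.probO
  exact Measure.isProbabilityMeasure_map measurable_fst.aemeasurable

/-- expected missing mass bound -/
lemma expected_miss (n : ℕ) :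
    ∫ S, (∑ x : α, if (∀ i, (S i).1 ≠ x) then (D.margI {x}).toReal else 0)
      ∂(sampleMeasure D n) ≤ (Fintype.card α : ℝ) / (n + 1) := by
  haveI := D.probI
  haveI := sample_prob D n
  haveI := margI_prob D
  have hint : ∀ x : α, Integrable
      (fun S : Fin n → α × ℕ => if (∀ i, (S i).1 ≠ x) then (D.margI {x}).toReal else 0)
      (sampleMeasure D n) := by
    intro x
    have : (fun S : Fin n → α × ℕ => if (∀ i, (S i).1 ≠ x) then (D.margI {x}).toReal else 0)
        = Set.indicator {S : Fin n → α × ℕ | ∀ i, (S i).1 ≠ x}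
            (fun _ => (D.margI {x}).toReal) := by
      funext S; rw [Set.indicator_apply]; congr
    rw [this]
    exact (integrable_const _).indicator (allMeasurable _)
  rw [integral_finset_sum Finset.univ (fun x _ => hint x)]
  have hterm : ∀ x : α,
      ∫ S, (if (∀ i, (S i).1 ≠ x) then (D.margI {x}).toReal else 0) ∂(sampleMeasure D n)
        ≤ 1 / (n + 1) := by
    intro x
    have heq : (fun S : Fin n → α × ℕ => if (∀ i, (S i).1 ≠ x) then (D.margI {x}).toReal else 0)
        = Set.indicator {S : Fin n → α × ℕ | ∀ i, (S i).1 ≠ x}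
            (fun _ => (D.margI {x}).toReal) := by
      funext S; rw [Set.indicator_apply]; congr
    rw [heq, integral_indicator_const _ (allMeasurable _), measureReal_def, sample_miss D n x, DI_fst_ne D x]
    have hle : D.margI {x} ≤ 1 := by
      calc D.margI {x} ≤ D.margI Set.univ := measure_mono (Set.subset_univ _)
        _ = 1 := measure_univ
    have htr : ((1 - D.margI {x}) ^ n).toReal = (1 - (D.margI {x}).toReal) ^ n := by
      rw [ENNReal.toReal_pow, ENNReal.toReal_sub_of_le hle ENNReal.one_ne_top, ENNReal.toReal_one]
    rw [smul_eq_mul, htr]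
    have hp0 : 0 ≤ (D.margI {x}).toReal := ENNReal.toReal_nonneg
    have hp1 : (D.margI {x}).toReal ≤ 1 := by
      rw [show (1:ℝ) = (1:ℝ≥0∞).toReal from ENNReal.toReal_one.symm]
      exact ENNReal.toReal_mono ENNReal.one_ne_top hle
    calc (1 - (D.margI {x}).toReal) ^ n * (D.margI {x}).toReal
        = (D.margI {x}).toReal * (1 - (D.margI {x}).toReal) ^ n := mul_comm _ _
      _ ≤ 1 / (n + 1) := real_bound _ hp0 hp1 n
  calc ∑ x : α, ∫ S, (if (∀ i, (S i).1 ≠ x) then (D.margI {x}).toReal else 0)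
        ∂(sampleMeasure D n)
      ≤ ∑ _x : α, (1:ℝ) / (n + 1) := Finset.sum_le_sum fun x _ => hterm x
    _ = (Fintype.card α : ℝ) / (n + 1) := by
      rw [Finset.sum_const, Finset.card_univ, nsmul_eq_mul]
      ring

end Sample


section Algo

def Fset {α : Type*} {n : ℕ} (S : Fin n → α × ℕ) : Set α := {x | ∃ i, (S i).1 = x}

def algo (R : Set (α → ℝ)) (F : Set α) : α → ℝ :=
  if h : ∃ r ∈ R, ∀ x ∈ F, ∀ x' ∉ F, r x' < r x then h.choose
  else if h' : ∃ r, r ∈ R then h'.choose else fun _ => 0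

lemma algo_mem {R : Set (α → ℝ)} (hR : ∃ r, r ∈ R) (F : Set α) : algo R F ∈ R := by
  unfold algo; split_ifs with h
  · exact h.choose_spec.1
  · exact hR.choose_spec

lemma algo_spec {R : Set (α → ℝ)} {F : Set α}
    (h : ∃ r ∈ R, ∀ x ∈ F, ∀ x' ∉ F, r x' < r x) :
    ∀ x ∈ F, ∀ x' ∉ F, algo R F x' < algo R F x := by
  unfold algo; rw [dif_pos h]; exact h.choose_spec.2

lemma measurable_any {n : ℕ} (f : (Fin n → α × ℕ) → ℝ) : Measurable f :=
  fun _ _ => allMeasurable _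

lemma integrable_any {n : ℕ} (D : Domain α K) (f : (Fin n → α × ℕ) → ℝ) (C : ℝ)
    (hC : ∀ S, |f S| ≤ C) : Integrable f (sampleMeasure D n) := by
  haveI := sample_prob D n
  exact Integrable.mono' (integrable_const C) (measurable_any f).aestronglyMeasurable
    (Filter.Eventually.of_forall (fun S => by rw [Real.norm_eq_abs]; exact hC S))

lemma K_pos (D : Domain α K) : 1 ≤ K := by
  by_contra h
  have hK : K = 0 := by omega
  haveI := D.probI
  have h1 := D.suppI
  have h2 : {p : α × ℕ | p.2 ∉ Set.Icc 1 K} = Set.univ := by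
    ext p; simp [hK]
  rw [h2, measure_univ] at h1
  exact one_ne_zero h1

lemma sep_disjoint {D : Domain α K} (hD : D ∈ separateSpace α K) :
    ∀ x : α, 0 < D.margO {x} → ¬ 0 < D.margI {x} := by
  have h : mSupport D.margO ∩ mSupport D.margI = ∅ := hD
  rw [mSupport_eq, mSupport_eq] at h
  intro x h1 h2
  have : x ∈ ({x | 0 < D.margO {x}} ∩ {x | 0 < D.margI {x}}) := ⟨h1, h2⟩
  rw [h] at this
  exact this

lemma margO_support_nonempty (D : Domain α K) : ∃ y, 0 < D.margO {y} := by
  by_contra h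
  push_neg at h
  haveI := margO_prob D
  have h0 : D.margO Set.univ = 0 :=
    meas_zero_of_singletons _ _ (fun x _ => le_antisymm (h x) zero_le)
  rw [measure_univ] at h0
  exact one_ne_zero h0

theorem realizable_learnable (R : Set (α → ℝ))
    (hsepR : ∀ x : α, ∃ r ∈ R, ∀ x' : α, x' ≠ x → r x < r x')
    (hreal : ∀ D ∈ separateSpace α K, ∃ r ∈ R, AUC r D.margI D.margO = 1) :
    LearnableAUC (separateSpace α K) R := by
  refine ⟨fun n => (Fintype.card α : ℝ) / (n + 1), ?_, ?_, ?_⟩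
  · intro n m hnm
    apply div_le_div_of_nonneg_left (by positivity) (by positivity)
    have : (n:ℝ) ≤ (m:ℝ) := Nat.cast_le.2 hnm
    linarith
  · have h0 := tendsto_one_div_add_atTop_nhds_zero_nat (𝕜 := ℝ)
    have h1 := h0.const_mul (Fintype.card α : ℝ)
    simpa [mul_one_div, div_eq_mul_inv] using h1
  · refine ⟨fun n S => algo R (Fset S), ?_, ?_, ?_⟩
    · intro n hn S
      exact algo_mem ⟨(hsepR (S ⟨0, hn⟩).1).choose, (hsepR _).choose_spec.1⟩ _
    · intro D hD n hn; exact measurable_any _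
    · intro D hD n hn
      haveI := D.probI; haveI := margI_prob D; haveI := margO_prob D
      haveI := sample_prob D n
      obtain ⟨rs, hrsR, hrs1⟩ := hreal D hD
      have hsup : (⨆ r : R, AUC r.1 D.margI D.margO) = 1 :=
        ciSup_AUC_eq_one D.margI D.margO hrsR hrs1
      have hK : 1 ≤ K := K_pos D
      have hdisj := sep_disjoint hD
      obtain ⟨y0, hy0⟩ := margO_support_nonempty D
      set ν := sampleMeasure D n with hν
      set E : Set (Fin n → α × ℕ) := {S | ∀ i, 0 < D.margI {(S i).1}} with hE
      have hEc : ν Eᶜ = 0 := by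
        have hsub : Eᶜ ⊆ ⋃ i : Fin n, {S : Fin n → α × ℕ | S i ∈
            {p : α × ℕ | D.margI {p.1} = 0}} := by
          intro S hS
          simp only [hE, Set.mem_compl_iff, Set.mem_setOf_eq, not_forall] at hS
          obtain ⟨i, hi⟩ := hS
          exact Set.mem_iUnion.2 ⟨i, le_antisymm (not_lt.1 hi) zero_le⟩
        refine measure_mono_null hsub (measure_iUnion_null fun i => ?_)
        rw [hν, sample_cylinder]
        have hBp : {p : α × ℕ | D.margI {p.1} = 0}
            = Prod.fst ⁻¹' {x : α | D.margI {x} = 0} := rfl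
        rw [hBp, ← Measure.map_apply measurable_fst (allMeasurable _)]
        exact meas_zero_of_singletons _ _ (fun x hx => hx)
      have hple : ∀ x : α, (D.margI {x}).toReal ≤ 1 := by
        intro x
        rw [show (1:ℝ) = (1:ℝ≥0∞).toReal from ENNReal.toReal_one.symm]
        exact ENNReal.toReal_mono ENNReal.one_ne_top
          (le_trans (measure_mono (Set.subset_univ _)) measure_univ.le)
      have hpt : ∀ S ∈ E, 1 - AUC (algo R (Fset S)) D.margI D.margO
          ≤ ∑ x : α, (if (∀ i, (S i).1 ≠ x) then (D.margI {x}).toReal else 0) := by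
        intro S hS
        have hFP : ∀ x ∈ Fset S, 0 < D.margI {x} := by
          rintro x ⟨i, rfl⟩; exact hS i
        have hF : (Fset S).Nonempty := ⟨(S ⟨0, hn⟩).1, ⟨⟨0, hn⟩, rfl⟩⟩
        have hFc : (Fset S)ᶜ.Nonempty :=
          ⟨y0, fun hy => hdisj y0 hy0 (hFP y0 hy)⟩
        have hex := exists_separating_rank R hreal hK (Fset S) hF hFc
        have hsep' := algo_spec hex
        have hb := one_sub_AUC_le (algo R (Fset S)) D.margI D.margO (Fset S) hsep'
        have hQF : D.margO (Fset S) = 0 := by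
          refine meas_zero_of_singletons _ _ (fun x hx => ?_)
          by_contra hne
          exact hdisj x (pos_iff_ne_zero.2 hne) (hFP x hx)
        rw [hQF] at hb
        simp only [ENNReal.toReal_zero, add_zero] at hb
        have hcompl : (D.margI ((Fset S)ᶜ)).toReal
            = ∑ x : α, (if (∀ i, (S i).1 ≠ x) then (D.margI {x}).toReal else 0) := by
          rw [toReal_meas_eq_sum D.margI ((Fset S)ᶜ)]
          refine Finset.sum_congr rfl fun x _ => ?_
          have hiff : x ∈ (Fset S)ᶜ ↔ ∀ i, (S i).1 ≠ x := by
            simp only [Set.mem_compl_iff, Fset, Set.mem_setOf_eq, not_exists]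
          by_cases hx : x ∈ (Fset S)ᶜ
          · rw [if_pos hx, if_pos (hiff.1 hx)]
          · rw [if_neg hx, if_neg (fun h => hx (hiff.2 h))]
        exact le_trans hb (le_of_eq hcompl)
      have int1 : Integrable (fun S => 1 - AUC (algo R (Fset S)) D.margI D.margO) ν := by
        refine integrable_any D _ 2 (fun S => ?_)
        have h1 := AUC_nonneg (algo R (Fset S)) D.margI D.margO
        have h2 := AUC_le_one (algo R (Fset S)) D.margI D.margO
        rw [abs_le]; constructor <;> linarith
      have int2 : Integrable (fun S : Fin n → α × ℕ =>
          ∑ x : α, (if (∀ i, (S i).1 ≠ x) then (D.margI {x}).toReal else 0)) ν := by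
        refine integrable_any D _ (Fintype.card α : ℝ) (fun S => ?_)
        calc |∑ x : α, (if (∀ i, (S i).1 ≠ x) then (D.margI {x}).toReal else 0)|
            ≤ ∑ x : α, |if (∀ i, (S i).1 ≠ x) then (D.margI {x}).toReal else 0| :=
              Finset.abs_sum_le_sum_abs _ _
          _ ≤ ∑ _x : α, (1:ℝ) := by
              refine Finset.sum_le_sum fun x _ => ?_
              split_ifs with h
              · rw [abs_of_nonneg ENNReal.toReal_nonneg]; exact hple x
              · simp
          _ = (Fintype.card α : ℝ) := by simp
      have hae : (fun S => 1 - AUC (algo R (Fset S)) D.margI D.margO)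
          ≤ᶠ[MeasureTheory.ae ν] (fun S : Fin n → α × ℕ =>
            ∑ x : α, (if (∀ i, (S i).1 ≠ x) then (D.margI {x}).toReal else 0)) := by
        rw [Filter.EventuallyLE, MeasureTheory.ae_iff]
        refine measure_mono_null ?_ hEc
        intro S hSbad
        simp only [Set.mem_setOf_eq, not_le] at hSbad
        intro hSE
        exact absurd (hpt S hSE) (not_le.2 hSbad)
      calc ∫ S, ((⨆ r : R, AUC r.1 D.margI D.margO)
              - AUC (algo R (Fset S)) D.margI D.margO) ∂ν
          = ∫ S, (1 - AUC (algo R (Fset S)) D.margI D.margO) ∂ν := by rw [hsup]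
        _ ≤ ∫ S, (∑ x : α, (if (∀ i, (S i).1 ≠ x) then (D.margI {x}).toReal else 0)) ∂ν :=
            integral_mono_ae int1 int2 hae
        _ ≤ (Fintype.card α : ℝ) / (n + 1) := expected_miss D n


lemma dirac_pos {y x : α} : 0 < Measure.dirac y {x} ↔ y = x := by
  rw [Measure.dirac_apply, Set.indicator_apply]
  by_cases h : y ∈ ({x} : Set α)
  · simp only [h, if_true, Pi.one_apply]
    simpa using h
  · simp only [h, if_false]
    simp only [Set.mem_singleton_iff] at h
    simp [h]

lemma AUC_dirac (r : α → ℝ) (P : Measure α) [IsFiniteMeasure P] (y : α) :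
    AUC r P (Measure.dirac y) = ∑ x : α, (P {x}).toReal * gfun r x y := by
  rw [AUC_eq_sum]
  refine Finset.sum_congr rfl fun x _ => ?_
  congr 1
  calc ∑ x' : α, ((Measure.dirac y) {x'}).toReal * gfun r x x'
      = ∑ x' : α, (if y = x' then gfun r x x' else 0) := by
        refine Finset.sum_congr rfl fun x' _ => ?_
        rw [Measure.dirac_apply, Set.indicator_apply]
        by_cases h : y = x'
        · simp [h]
        · simp [h, Set.mem_singleton_iff]
    _ = gfun r x y := by
        rw [Finset.sum_ite_eq Finset.univ y (fun x' => gfun r x x')]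
        simp

lemma AUC_decomp (r : α → ℝ) (P Q : Measure α) [IsProbabilityMeasure P]
    [IsProbabilityMeasure Q] :
    AUC r P Q = ∑ y ∈ Finset.univ.filter (fun y => 0 < Q {y}),
      (Q {y}).toReal * AUC r P (Measure.dirac y) := by
  rw [AUC_eq_sum]
  calc ∑ x : α, (P {x}).toReal * ∑ y : α, (Q {y}).toReal * gfun r x y
      = ∑ x : α, ∑ y : α, (P {x}).toReal * ((Q {y}).toReal * gfun r x y) := by
        refine Finset.sum_congr rfl fun x _ => Finset.mul_sum _ _ _
    _ = ∑ y : α, ∑ x : α, (P {x}).toReal * ((Q {y}).toReal * gfun r x y) :=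
        Finset.sum_comm
    _ = ∑ y : α, (Q {y}).toReal * ∑ x : α, (P {x}).toReal * gfun r x y := by
        refine Finset.sum_congr rfl fun y _ => ?_
        rw [Finset.mul_sum]
        refine Finset.sum_congr rfl fun x _ => by ring
    _ = ∑ y ∈ Finset.univ.filter (fun y => 0 < Q {y}),
          (Q {y}).toReal * ∑ x : α, (P {x}).toReal * gfun r x y := by
        refine (Finset.sum_subset (Finset.filter_subset _ _) fun y _ hy => ?_).symm
        have : Q {y} = 0 := by
          by_contra hne
          exact hy (Finset.mem_filter.2 ⟨Finset.mem_univ y, pos_iff_ne_zero.2 hne⟩)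
        rw [this]
        simp
    _ = ∑ y ∈ Finset.univ.filter (fun y => 0 < Q {y}),
          (Q {y}).toReal * AUC r P (Measure.dirac y) :=
        Finset.sum_congr rfl fun y _ => by rw [AUC_dirac]

lemma sum_filter_toReal (Q : Measure α) [IsProbabilityMeasure Q] :
    ∑ y ∈ Finset.univ.filter (fun y => 0 < Q {y}), (Q {y}).toReal = 1 := by
  rw [Finset.sum_subset (Finset.filter_subset _ _) (fun y _ hy => ?_)]
  · exact sum_toReal_singleton Q
  · have : Q {y} = 0 := by
      by_contra hne
      exact hy (Finset.mem_filter.2 ⟨Finset.mem_univ y, pos_iff_ne_zero.2 hne⟩)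
    rw [this, ENNReal.toReal_zero]

/-- the domain with the same ID distribution but OOD concentrated at `y` -/
def domDirac (D : Domain α K) (y : α) : Domain α K where
  DI := D.DI
  DO := Measure.dirac (y, K + 1)
  prior := 0
  probI := D.probI
  probO := inferInstance
  suppI := D.suppI
  suppO := by
    rw [Measure.dirac_apply, Set.indicator_apply]
    simp
  prior_mem := ⟨le_refl 0, zero_lt_one⟩

lemma domDirac_margI (D : Domain α K) (y : α) : (domDirac D y).margI = D.margI := rfl

lemma domDirac_margO (D : Domain α K) (y : α) :
    (domDirac D y).margO = Measure.dirac y := by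
  show Measure.map Prod.fst (Measure.dirac (y, K + 1)) = _
  rw [Measure.map_dirac' measurable_fst]

lemma domDirac_sample (D : Domain α K) (y : α) (n : ℕ) :
    sampleMeasure (domDirac D y) n = sampleMeasure D n := rfl

lemma domDirac_mem {D : Domain α K} (hD : D ∈ separateSpace α K) {y : α}
    (hy : 0 < D.margO {y}) : domDirac D y ∈ separateSpace α K := by
  show mSupport _ ∩ mSupport _ = ∅
  rw [domDirac_margO, domDirac_margI, mSupport_eq, mSupport_eq]
  refine Set.eq_empty_iff_forall_notMem.2 fun x ⟨hxO, hxI⟩ => ?_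
  have hxy : y = x := dirac_pos.1 hxO
  exact sep_disjoint hD y hy (hxy ▸ hxI)

theorem learnable_realizable (R : Set (α → ℝ))
    (hsepR : ∀ x : α, ∃ r ∈ R, ∀ x' : α, x' ≠ x → r x < r x')
    (hL : LearnableAUC (separateSpace α K) R) :
    ∀ D ∈ separateSpace α K, ∃ r ∈ R, AUC r D.margI D.margO = 1 := by
  obtain ⟨ε, hanti, htend, A, hA1, hA2, hA3⟩ := hL
  intro D hD
  haveI := D.probI; haveI := margI_prob D; haveI := margO_prob D
  have hdisj := sep_disjoint hD
  have hRne : R.Nonempty := by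
    obtain ⟨y, hy⟩ := margO_support_nonempty D
    exact ⟨_, (hsepR y).choose_spec.1⟩
  obtain ⟨r₀, hr₀R, hmax⟩ := exists_max_AUC D.margI D.margO hRne
  refine ⟨r₀, hr₀R, le_antisymm (AUC_le_one r₀ D.margI D.margO) ?_⟩
  set T := Finset.univ.filter (fun y => 0 < D.margO {y}) with hT
  have hsumT : ∑ y ∈ T, (D.margO {y}).toReal = 1 := sum_filter_toReal D.margO
  have key : ∀ n, 1 ≤ n → 1 - ε n ≤ AUC r₀ D.margI D.margO := by
    intro n hn
    haveI := sample_prob D n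
    have hy_int : ∀ y : α, Integrable
        (fun S => AUC (A n S) D.margI (Measure.dirac y)) (sampleMeasure D n) := by
      intro y
      refine integrable_any D _ 1 (fun S => ?_)
      have h1 := AUC_nonneg (A n S) D.margI (Measure.dirac y)
      have h2 := AUC_le_one (A n S) D.margI (Measure.dirac y)
      rw [abs_le]; constructor <;> linarith
    have hy_key : ∀ y ∈ T, 1 - ε n
        ≤ ∫ S, AUC (A n S) D.margI (Measure.dirac y) ∂(sampleMeasure D n) := by
      intro y hyT
      have hy : 0 < D.margO {y} := (Finset.mem_filter.1 hyT).2
      have hcons := hA3 (domDirac D y) (domDirac_mem hD hy) n hn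
      rw [domDirac_sample] at hcons
      simp only [domDirac_margI, domDirac_margO] at hcons
      obtain ⟨ry, hryR, hry⟩ := hsepR y
      have hy_notP : ¬ 0 < D.margI {y} := hdisj y hy
      have hAUCry : AUC ry D.margI (Measure.dirac y) = 1 := by
        refine AUC_eq_one_of ry D.margI (Measure.dirac y) (fun x y' hx hy' => ?_)
        have hyy : y = y' := dirac_pos.1 hy'
        subst hyy
        have hxy : x ≠ y := fun h => hy_notP (h ▸ hx)
        exact hry x hxy
      have hsup1 : (⨆ r : R, AUC r.1 D.margI (Measure.dirac y)) = 1 :=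
        ciSup_AUC_eq_one _ _ hryR hAUCry
      rw [hsup1] at hcons
      rw [integral_sub (integrable_const 1) (hy_int y), integral_const] at hcons
      simp only [measure_univ, probReal_univ, ENNReal.toReal_one, smul_eq_mul, one_mul] at hcons
      linarith
    have hdec : ∀ S, AUC (A n S) D.margI D.margO
        = ∑ y ∈ T, (D.margO {y}).toReal * AUC (A n S) D.margI (Measure.dirac y) :=
      fun S => AUC_decomp (A n S) D.margI D.margO
    have hintsum : ∫ S, AUC (A n S) D.margI D.margO ∂(sampleMeasure D n)
        = ∑ y ∈ T, (D.margO {y}).toReal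
            * ∫ S, AUC (A n S) D.margI (Measure.dirac y) ∂(sampleMeasure D n) := by
      calc ∫ S, AUC (A n S) D.margI D.margO ∂(sampleMeasure D n)
          = ∫ S, (∑ y ∈ T, (D.margO {y}).toReal
              * AUC (A n S) D.margI (Measure.dirac y)) ∂(sampleMeasure D n) := by
            refine integral_congr_ae (Filter.Eventually.of_forall fun S => hdec S)
        _ = ∑ y ∈ T, ∫ S, (D.margO {y}).toReal
              * AUC (A n S) D.margI (Measure.dirac y) ∂(sampleMeasure D n) :=
            integral_finset_sum T (fun y _ => (hy_int y).const_mul _)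
        _ = ∑ y ∈ T, (D.margO {y}).toReal
              * ∫ S, AUC (A n S) D.margI (Measure.dirac y) ∂(sampleMeasure D n) :=
            Finset.sum_congr rfl fun y _ => integral_const_mul _ _
    have hbound1 : 1 - ε n ≤ ∫ S, AUC (A n S) D.margI D.margO ∂(sampleMeasure D n) := by
      rw [hintsum]
      calc 1 - ε n = ∑ y ∈ T, (D.margO {y}).toReal * (1 - ε n) := by
            rw [← Finset.sum_mul, hsumT, one_mul]
        _ ≤ ∑ y ∈ T, (D.margO {y}).toReal
              * ∫ S, AUC (A n S) D.margI (Measure.dirac y) ∂(sampleMeasure D n) :=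
            Finset.sum_le_sum fun y hy =>
              mul_le_mul_of_nonneg_left (hy_key y hy) ENNReal.toReal_nonneg
    have hbound2 : ∫ S, AUC (A n S) D.margI D.margO ∂(sampleMeasure D n)
        ≤ AUC r₀ D.margI D.margO := by
      have hint : Integrable (fun S => AUC (A n S) D.margI D.margO) (sampleMeasure D n) := by
        refine integrable_any D _ 1 (fun S => ?_)
        have h1 := AUC_nonneg (A n S) D.margI D.margO
        have h2 := AUC_le_one (A n S) D.margI D.margO
        rw [abs_le]; constructor <;> linarith
      calc ∫ S, AUC (A n S) D.margI D.margO ∂(sampleMeasure D n)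
          ≤ ∫ _S, AUC r₀ D.margI D.margO ∂(sampleMeasure D n) :=
            integral_mono_ae hint (integrable_const _)
              (Filter.Eventually.of_forall fun S => hmax _ (hA1 n hn S))
        _ = AUC r₀ D.margI D.margO := by
            rw [integral_const]
            simp [measure_univ]
    linarith
  have hlim : Tendsto (fun n => 1 - ε n) atTop (nhds 1) := by
    have h := htend.const_sub 1
    simpa using h
  refine le_of_tendsto hlim ?_
  filter_upwards [Filter.eventually_ge_atTop 1] with n hn using key n hn

end Algo
end Aux


/-- Theorem 11 / `T13_auc` of the paper.  Let `R` be a separate ranking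
function space and `X` finite.  Then OOD detection is learnable under AUC in the separate
space `𝒟^s` for `R` iff the AUC-based Realizability Assumption holds: every domain in
`𝒟^s` admits a ranking function in `R` with AUC equal to `1`. -/
theorem stmt13 {d K : ℕ} (X : Set (EuclideanSpace ℝ (Fin d))) [Finite ↥X]
    (R : Set (↥X → ℝ)) (hR : ∀ r ∈ R, Measurable r)
    (hsepR : ∀ x : ↥X, ∃ r ∈ R, ∀ x' : ↥X, x' ≠ x → r x < r x') :
    LearnableAUC (separateSpace ↥X K) R ↔
      ∀ D ∈ separateSpace ↥X K, ∃ r ∈ R, AUC r D.margI D.margO = 1 := by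
  haveI : Fintype ↥X := Fintype.ofFinite ↥X
  constructor
  · exact fun hL => learnable_realizable R hsepR hL
  · exact fun hreal => realizable_learnable R hsepR hreal

end OODF

end
end

section
/- Suppose the hypothesis space H satisfies: for every x ∈ X there exists h_x ∈ H with h_x(x) = K+1. If there exists a domain D_XY in the separate space 𝒟^s whose support is finite (a finite discrete domain) such that inf_{h∈H} R_D^out(h) > 0, then OOD detection is not learnable under risk in 𝒟^s for H. -/
open MeasureTheory Filter Set
open scoped ENNReal NNReal

noncomputable section

namespace OODF

variable {𝒳 : Type*} [MeasurableSpace 𝒳] {K : ℕ}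

section Aux

variable {𝒳 : Type*} [MeasurableSpace 𝒳] {K : ℕ} {ℓ : ℕ → ℕ → ℝ}

lemma aux_meas_loss {h : 𝒳 → ℕ} (hh : Measurable h) (ℓ : ℕ → ℕ → ℝ) :
    Measurable (fun p : 𝒳 × ℕ => ℓ (h p.1) p.2) :=
  (measurable_of_countable (Function.uncurry ℓ)).comp
    ((hh.comp measurable_fst).prodMk measurable_snd)

lemma aux_meas_loss' {h : 𝒳 → ℕ} (hh : Measurable h) (ℓ : ℕ → ℕ → ℝ) (k : ℕ) :
    Measurable (fun p : 𝒳 × ℕ => ℓ (h p.1) k) :=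
  (measurable_of_countable (fun n => ℓ n k)).comp (hh.comp measurable_fst)

lemma aux_risk_nonneg (hnn : ∀ y₁ y₂, 0 ≤ ℓ y₁ y₂) (D : Domain 𝒳 K) (h : 𝒳 → ℕ) :
    0 ≤ risk ℓ D h :=
  integral_nonneg fun p => hnn _ _

lemma aux_riskIn_nonneg (hnn : ∀ y₁ y₂, 0 ≤ ℓ y₁ y₂) (D : Domain 𝒳 K) (h : 𝒳 → ℕ) :
    0 ≤ riskIn ℓ D h :=
  integral_nonneg fun p => hnn _ _

lemma aux_riskOut_nonneg (hnn : ∀ y₁ y₂, 0 ≤ ℓ y₁ y₂) (D : Domain 𝒳 K) (h : 𝒳 → ℕ) :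
    0 ≤ riskOut ℓ D h :=
  integral_nonneg fun p => hnn _ _

/-- a.e. w.r.t. `D.DI`, the label lies in `Icc 1 K`. -/
lemma aux_ae_label (D : Domain 𝒳 K) : ∀ᵐ p ∂D.DI, p.2 ∈ Set.Icc 1 K := by
  rw [ae_iff]
  exact D.suppI

lemma aux_integrable_DI {h : 𝒳 → ℕ} (hh : Measurable h)
    (hrange : ∀ x, h x ∈ Set.Icc 1 (K + 1))
    (hnn : ∀ y₁ y₂, 0 ≤ ℓ y₁ y₂) {B : ℝ}
    (hB : ∀ y₁ ∈ Set.Icc 1 (K + 1), ∀ y₂ ∈ Set.Icc 1 (K + 1), ℓ y₁ y₂ ≤ B)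
    (D : Domain 𝒳 K) :
    Integrable (fun p : 𝒳 × ℕ => ℓ (h p.1) p.2) D.DI := by
  letI := D.probI
  refine ⟨(aux_meas_loss hh ℓ).aestronglyMeasurable,
    HasFiniteIntegral.of_bounded (C := max B 0) ?_⟩
  filter_upwards [aux_ae_label D] with p hp
  rw [Real.norm_eq_abs, abs_of_nonneg (hnn _ _)]
  exact le_max_of_le_left (hB _ (hrange _) _ ⟨hp.1, hp.2.trans (Nat.le_succ K)⟩)

lemma aux_riskIn_le {h : 𝒳 → ℕ} (hh : Measurable h)
    (hrange : ∀ x, h x ∈ Set.Icc 1 (K + 1))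
    (hnn : ∀ y₁ y₂, 0 ≤ ℓ y₁ y₂) {B : ℝ}
    (hB : ∀ y₁ ∈ Set.Icc 1 (K + 1), ∀ y₂ ∈ Set.Icc 1 (K + 1), ℓ y₁ y₂ ≤ B)
    (D : Domain 𝒳 K) :
    riskIn ℓ D h ≤ max B 0 := by
  letI := D.probI
  have h1 : riskIn ℓ D h ≤ ∫ _p, max B 0 ∂D.DI := by
    refine integral_mono_ae (aux_integrable_DI hh hrange hnn hB D) (integrable_const _) ?_
    filter_upwards [aux_ae_label D] with p hp
    exact le_max_of_le_left (hB _ (hrange _) _ ⟨hp.1, hp.2.trans (Nat.le_succ K)⟩)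
  simpa using h1

/-- the point-OOD domain: same ID distribution as `D`, OOD distribution the Dirac mass
at `(x, K+1)`, prior `α`. -/
def ptDomain (D : Domain 𝒳 K) (x : 𝒳) (α : Set.Ico (0 : ℝ) 1) : Domain 𝒳 K where
  DI := D.DI
  DO := Measure.dirac (x, K + 1)
  prior := α.1
  probI := D.probI
  probO := Measure.dirac.isProbabilityMeasure
  suppI := D.suppI
  suppO := by
    have hms : MeasurableSet {p : 𝒳 × ℕ | p.2 ≠ K + 1} :=
      ((measurableSet_singleton (K + 1)).compl).preimage measurable_snd
    rw [Measure.dirac_apply' _ hms]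
    simp
  prior_mem := α.2

lemma aux_sample_pt (D : Domain 𝒳 K) (x : 𝒳) (α : Set.Ico (0 : ℝ) 1) (n : ℕ) :
    sampleMeasure (ptDomain D x α) n = sampleMeasure D n := rfl

lemma aux_sample_prob (D : Domain 𝒳 K) (n : ℕ) :
    IsProbabilityMeasure (sampleMeasure D n) := by
  unfold sampleMeasure
  letI := D.probI
  infer_instance

variable [MeasurableSingletonClass 𝒳]

/-- risk decomposition for the point-OOD domain -/
lemma aux_risk_pt {h : 𝒳 → ℕ} (hh : Measurable h)
    (hrange : ∀ x, h x ∈ Set.Icc 1 (K + 1))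
    (hnn : ∀ y₁ y₂, 0 ≤ ℓ y₁ y₂) {B : ℝ}
    (hB : ∀ y₁ ∈ Set.Icc 1 (K + 1), ∀ y₂ ∈ Set.Icc 1 (K + 1), ℓ y₁ y₂ ≤ B)
    (D : Domain 𝒳 K) (x : 𝒳) (α : Set.Ico (0 : ℝ) 1) :
    risk ℓ (ptDomain D x α) h = (1 - α.1) * riskIn ℓ D h + α.1 * ℓ (h x) (K + 1) := by
  have hfm := aux_meas_loss hh ℓ
  have hint := aux_integrable_DI hh hrange hnn hB D
  have hintd : Integrable (fun p : 𝒳 × ℕ => ℓ (h p.1) p.2) (Measure.dirac (x, K + 1)) := by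
    refine ⟨hfm.aestronglyMeasurable,
      HasFiniteIntegral.of_bounded (C := ‖ℓ (h x) (K + 1)‖) ?_⟩
    rw [ae_dirac_eq]
    exact eventually_pure.2 (le_refl _)
  have h0 : (0 : ℝ) ≤ α.1 := α.2.1
  have h1 : (0 : ℝ) ≤ 1 - α.1 := sub_nonneg.mpr (le_of_lt α.2.2)
  show ∫ p, ℓ (h p.1) p.2
      ∂(ENNReal.ofReal (1 - α.1) • D.DI + ENNReal.ofReal α.1 • Measure.dirac (x, K + 1)) = _
  rw [integral_add_measure (hint.smul_measure ENNReal.ofReal_ne_top)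
    (hintd.smul_measure ENNReal.ofReal_ne_top), integral_smul_measure, integral_smul_measure,
    integral_dirac' _ _ hfm.stronglyMeasurable]
  simp [ENNReal.toReal_ofReal h0, ENNReal.toReal_ofReal h1, smul_eq_mul, riskIn]

variable [TopologicalSpace 𝒳] [OpensMeasurableSpace 𝒳] [T1Space 𝒳]

lemma aux_pt_mem_sep (D : Domain 𝒳 K) (hD : D ∈ separateSpace 𝒳 K) {x : 𝒳}
    (hx : 0 < D.DO {(x, K + 1)}) (α : Set.Ico (0 : ℝ) 1) :
    ptDomain D x α ∈ separateSpace 𝒳 K := by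
  have hxO : x ∈ mSupport D.margO := by
    intro U hU
    obtain ⟨V, hVU, hVopen, hxV⟩ := mem_nhds_iff.mp hU
    calc (0 : ℝ≥0∞) < D.DO {(x, K + 1)} := hx
      _ ≤ D.DO (Prod.fst ⁻¹' V) := measure_mono (by
          intro q hq
          rw [Set.mem_singleton_iff] at hq
          subst hq
          exact hxV)
      _ = D.margO V := (Measure.map_apply measurable_fst hVopen.measurableSet).symm
      _ ≤ D.margO U := measure_mono hVU
  have hxI : x ∉ mSupport D.margI := by
    intro hmem
    have : x ∈ mSupport D.margO ∩ mSupport D.margI := ⟨hxO, hmem⟩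
    rw [hD] at this
    exact this
  have hmap : (ptDomain D x α).margO = Measure.dirac x := Measure.map_dirac' measurable_fst _
  have hsub : mSupport (Measure.dirac x : Measure 𝒳) ⊆ {x} := by
    intro y hy
    by_contra hne
    have hyx : y ≠ x := by simpa using hne
    have h2 := hy {x}ᶜ ((isOpen_compl_singleton).mem_nhds (by simpa using hyx))
    rw [Measure.dirac_apply' _ (measurableSet_singleton x).compl] at h2
    simp at h2
  show mSupport (ptDomain D x α).margO ∩ mSupport (ptDomain D x α).margI = ∅
  rw [hmap]
  apply Set.eq_empty_iff_forall_notMem.mpr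
  rintro y ⟨hyO, hyI⟩
  have hyx : y = x := hsub hyO
  subst hyx
  exact hxI hyI

lemma aux_riskOut_sum {h : 𝒳 → ℕ} (hh : Measurable h)
    (hrange : ∀ x, h x ∈ Set.Icc 1 (K + 1))
    (hnn : ∀ y₁ y₂, 0 ≤ ℓ y₁ y₂) {B : ℝ}
    (hB : ∀ y₁ ∈ Set.Icc 1 (K + 1), ∀ y₂ ∈ Set.Icc 1 (K + 1), ℓ y₁ y₂ ≤ B)
    (D : Domain 𝒳 K) {s : Finset (𝒳 × ℕ)} (hs : D.DO ((↑s : Set (𝒳 × ℕ))ᶜ) = 0) :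
    riskOut ℓ D h = ∑ p ∈ s, (D.DO {p}).toReal * ℓ (h p.1) (K + 1) := by
  letI := D.probO
  have hKmem : (K + 1) ∈ Set.Icc 1 (K + 1) := ⟨Nat.one_le_iff_ne_zero.mpr (Nat.succ_ne_zero K), le_refl _⟩
  have hint : Integrable (fun p : 𝒳 × ℕ => ℓ (h p.1) (K + 1)) D.DO := by
    refine ⟨(aux_meas_loss' hh ℓ (K + 1)).aestronglyMeasurable,
      HasFiniteIntegral.of_bounded (C := max B 0) (Filter.Eventually.of_forall fun p => ?_)⟩
    rw [Real.norm_eq_abs, abs_of_nonneg (hnn _ _)]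
    exact le_max_of_le_left (hB _ (hrange _) _ hKmem)
  have hres : D.DO.restrict ↑s = D.DO := by
    refine Measure.restrict_eq_self_of_ae_mem ?_
    rw [ae_iff]
    exact hs
  calc riskOut ℓ D h = ∫ p in (↑s : Set (𝒳 × ℕ)), ℓ (h p.1) (K + 1) ∂D.DO := by
        show ∫ p, ℓ (h p.1) (K + 1) ∂D.DO = ∫ p, ℓ (h p.1) (K + 1) ∂(D.DO.restrict ↑s)
        rw [hres]
    _ = ∑ p ∈ s, (D.DO {p}).toReal • ℓ (h p.1) (K + 1) :=
        integral_finset s hint.integrableOn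
    _ = ∑ p ∈ s, (D.DO {p}).toReal * ℓ (h p.1) (K + 1) := by
        simp [smul_eq_mul]

end Aux

set_option maxHeartbeats 1600000

/-- Lemma `T9` of the paper.  Suppose every point of `X` can be labeled
OOD by some hypothesis in `H`.  If some finite discrete domain `D` in the separate space
`𝒟^s` satisfies `inf_{h∈H} R_D^out(h) > 0`, then OOD detection is not learnable under risk
in `𝒟^s` for `H`. -/
theorem stmt17 {d K : ℕ} (X : Set (EuclideanSpace ℝ (Fin d)))
    (ℓ : ℕ → ℕ → ℝ)
    (hl_nonneg : ∀ y₁ y₂, 0 ≤ ℓ y₁ y₂)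
    (hl_zero : ∀ y₁ ∈ Set.Icc 1 (K + 1), ∀ y₂ ∈ Set.Icc 1 (K + 1), (ℓ y₁ y₂ = 0 ↔ y₁ = y₂))
    (hl_bdd : ∃ B, ∀ y₁ ∈ Set.Icc 1 (K + 1), ∀ y₂ ∈ Set.Icc 1 (K + 1), ℓ y₁ y₂ ≤ B)
    (H : Set (↥X → ℕ)) (hH : ∀ h ∈ H, Measurable h ∧ ∀ x, h x ∈ Set.Icc 1 (K + 1))
    (hsepH : ∀ x : ↥X, ∃ h ∈ H, h x = K + 1)
    (hexist : ∃ D ∈ separateSpace ↥X K,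
      (∃ s : Finset (↥X × ℕ), D.DI ((↑s : Set (↥X × ℕ))ᶜ) = 0 ∧
        D.DO ((↑s : Set (↥X × ℕ))ᶜ) = 0) ∧
      0 < ⨅ h : H, riskOut ℓ D h.1) :
    ¬ LearnableRisk ℓ (separateSpace ↥X K) H := by
  rintro ⟨ε, hanti, htend, A, hmemH, hmeasR, hboundR⟩
  obtain ⟨D, hDsep, ⟨s, hsI, hsO⟩, hinf⟩ := hexist
  obtain ⟨B₀, hB₀⟩ := hl_bdd
  set B : ℝ := max B₀ 0 with hBdef
  have hB : ∀ y₁ ∈ Set.Icc 1 (K + 1), ∀ y₂ ∈ Set.Icc 1 (K + 1), ℓ y₁ y₂ ≤ B :=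
    fun y₁ h1 y₂ h2 => le_max_of_le_left (hB₀ y₁ h1 y₂ h2)
  have hBnn : (0 : ℝ) ≤ B := le_max_right _ _
  have hBmax : max B 0 = B := max_eq_left hBnn
  have hKmem : (K + 1) ∈ Set.Icc 1 (K + 1) :=
    ⟨Nat.one_le_iff_ne_zero.mpr (Nat.succ_ne_zero K), le_refl _⟩
  have hε0 : ∀ n, 0 ≤ ε n := fun n =>
    le_of_tendsto htend (Filter.eventually_atTop.2 ⟨n, fun m hm => hanti hm⟩)
  have hprob : ∀ n, IsProbabilityMeasure (sampleMeasure D n) := aux_sample_prob D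
  -- key claim: for each OOD atom `x` of `D`, the expected loss of the algorithm's output
  -- at `x` against the OOD label is at most `ε n`.
  have key : ∀ x : ↥X, 0 < D.DO {(x, K + 1)} → ∀ n, 1 ≤ n →
      Measurable (fun S : Fin n → ↥X × ℕ => ℓ (A n S x) (K + 1)) ∧
      ∫ S, ℓ (A n S x) (K + 1) ∂(sampleMeasure D n) ≤ ε n := by
    intro x hx n hn
    letI := hprob n
    have hsep' : ∀ α, ptDomain D x α ∈ separateSpace ↥X K :=
      fun α => aux_pt_mem_sep D hDsep hx α
    have hA : ∀ S, Measurable (A n S) ∧ ∀ z, A n S z ∈ Set.Icc 1 (K + 1) :=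
      fun S => hH _ (hmemH n hn S)
    have hrisk : ∀ (α : Set.Ico (0 : ℝ) 1) (S : Fin n → ↥X × ℕ),
        risk ℓ (ptDomain D x α) (A n S)
          = (1 - α.1) * riskIn ℓ D (A n S) + α.1 * ℓ (A n S x) (K + 1) :=
      fun α S => aux_risk_pt (hA S).1 (hA S).2 hl_nonneg hB₀ D x α
    have hg01 : ∀ S : Fin n → ↥X × ℕ,
        0 ≤ ℓ (A n S x) (K + 1) ∧ ℓ (A n S x) (K + 1) ≤ B := fun S =>
      ⟨hl_nonneg _ _, hB _ ((hA S).2 x) _ hKmem⟩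
    have hgm : Measurable (fun S : Fin n → ↥X × ℕ => ℓ (A n S x) (K + 1)) := by
      have heq : (fun S : Fin n → ↥X × ℕ => ℓ (A n S x) (K + 1))
          = fun S => 2 * risk ℓ (ptDomain D x ⟨1/2, by norm_num⟩) (A n S)
            - risk ℓ (ptDomain D x ⟨0, by norm_num⟩) (A n S) := by
        funext S
        rw [hrisk ⟨1/2, by norm_num⟩ S, hrisk ⟨0, by norm_num⟩ S]
        norm_num
        ring
      rw [heq]
      exact ((hmeasR _ (hsep' _) n hn).const_mul 2).sub (hmeasR _ (hsep' _) n hn)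
    have hgint : Integrable (fun S : Fin n → ↥X × ℕ => ℓ (A n S x) (K + 1))
        (sampleMeasure D n) :=
      ⟨hgm.aestronglyMeasurable, HasFiniteIntegral.of_bounded (C := B)
        (Filter.Eventually.of_forall fun S => by
          rw [Real.norm_eq_abs, abs_of_nonneg (hg01 S).1]; exact (hg01 S).2)⟩
    refine ⟨hgm, ?_⟩
    set I := ∫ S, ℓ (A n S x) (K + 1) ∂(sampleMeasure D n) with hIdef
    have hIg0 : 0 ≤ I := integral_nonneg fun S => (hg01 S).1
    obtain ⟨hx', hxH, hhx⟩ := hsepH x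
    haveI : Nonempty ↑H := ⟨⟨hx', hxH⟩⟩
    have hhx' := hH _ hxH
    have hmain : ∀ α : Set.Ico (0 : ℝ) 1, α.1 * I - (1 - α.1) * B ≤ ε n := by
      intro α
      have h0 : (0 : ℝ) ≤ α.1 := α.2.1
      have h1 : (0 : ℝ) ≤ 1 - α.1 := sub_nonneg.mpr (le_of_lt α.2.2)
      have hinfle : (⨅ h : H, risk ℓ (ptDomain D x α) h.1) ≤ (1 - α.1) * B := by
        have hbdd : BddBelow (Set.range fun h : H => risk ℓ (ptDomain D x α) h.1) := by
          refine ⟨0, ?_⟩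
          rintro _ ⟨h, rfl⟩
          exact aux_risk_nonneg hl_nonneg _ _
        refine le_trans (ciInf_le hbdd ⟨hx', hxH⟩) ?_
        rw [aux_risk_pt hhx'.1 hhx'.2 hl_nonneg hB₀ D x α, hhx,
          (hl_zero _ hKmem _ hKmem).mpr rfl, mul_zero, add_zero]
        have hin := aux_riskIn_le hhx'.1 hhx'.2 hl_nonneg hB₀ D
        rw [← hBdef] at hin
        exact mul_le_mul_of_nonneg_left hin h1
      have hinf0 : 0 ≤ ⨅ h : H, risk ℓ (ptDomain D x α) h.1 :=
        le_ciInf fun h => aux_risk_nonneg hl_nonneg _ _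
      have hcons := hboundR _ (hsep' α) n hn
      rw [aux_sample_pt] at hcons
      have hφm : Measurable (fun S : Fin n → ↥X × ℕ =>
          risk ℓ (ptDomain D x α) (A n S) - ⨅ h : H, risk ℓ (ptDomain D x α) h.1) :=
        (hmeasR _ (hsep' α) n hn).sub measurable_const
      have hrin : ∀ S, riskIn ℓ D (A n S) ≤ B := by
        intro S
        have hin := aux_riskIn_le (hA S).1 (hA S).2 hl_nonneg hB₀ D
        rwa [← hBdef] at hin
      have hφb : ∀ S : Fin n → ↥X × ℕ,
          |risk ℓ (ptDomain D x α) (A n S) - ⨅ h : H, risk ℓ (ptDomain D x α) h.1| ≤ B := by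
        intro S
        have hr0 : 0 ≤ risk ℓ (ptDomain D x α) (A n S) := aux_risk_nonneg hl_nonneg _ _
        have hrB : risk ℓ (ptDomain D x α) (A n S) ≤ B := by
          rw [hrisk]
          nlinarith [(hg01 S).1, (hg01 S).2, aux_riskIn_nonneg hl_nonneg D (A n S), hrin S]
        have hiB : (⨅ h : H, risk ℓ (ptDomain D x α) h.1) ≤ B :=
          le_trans hinfle (by nlinarith)
        rw [abs_le]
        constructor <;> nlinarith [hinf0]
      have hφint : Integrable (fun S : Fin n → ↥X × ℕ =>
          risk ℓ (ptDomain D x α) (A n S) - ⨅ h : H, risk ℓ (ptDomain D x α) h.1)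
          (sampleMeasure D n) :=
        ⟨hφm.aestronglyMeasurable, HasFiniteIntegral.of_bounded (C := B)
          (Filter.Eventually.of_forall fun S => by rw [Real.norm_eq_abs]; exact hφb S)⟩
      have hψint : Integrable
          (fun S : Fin n → ↥X × ℕ => α.1 * ℓ (A n S x) (K + 1) - (1 - α.1) * B)
          (sampleMeasure D n) := (hgint.const_mul _).sub (integrable_const _)
      have hle : ∫ S, (α.1 * ℓ (A n S x) (K + 1) - (1 - α.1) * B) ∂(sampleMeasure D n)
          ≤ ∫ S, (risk ℓ (ptDomain D x α) (A n S)
              - ⨅ h : H, risk ℓ (ptDomain D x α) h.1) ∂(sampleMeasure D n) := by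
        refine integral_mono hψint hφint fun S => ?_
        have hr := hrisk α S
        have h3 := aux_riskIn_nonneg hl_nonneg D (A n S)
        nlinarith [hinfle]
      rw [integral_sub (hgint.const_mul _) (integrable_const _), integral_const_mul,
        integral_const] at hle
      simp only [probReal_univ, smul_eq_mul, one_mul] at hle
      rw [hIdef]
      linarith [le_trans hle hcons]
    by_contra hlt
    push_neg at hlt
    set δ : ℝ := (I - ε n) / 2 with hδdef
    have hδ : 0 < δ := by simp only [hδdef]; linarith
    have ht0 : (0 : ℝ) ≤ B + I := by linarith
    rcases eq_or_lt_of_le ht0 with hteq | htpos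
    · have hI0 : I = 0 := by linarith
      rw [hI0] at hlt
      linarith [hε0 n]
    · set α : Set.Ico (0 : ℝ) 1 := ⟨max 0 (1 - δ / (B + I)), by
        constructor
        · exact le_max_left _ _
        · apply max_lt one_pos
          have hpos : 0 < δ / (B + I) := div_pos hδ htpos
          linarith⟩ with hαdef
      have h1a : 1 - α.1 ≤ δ / (B + I) := by
        have hge : 1 - δ / (B + I) ≤ α.1 := le_max_right _ _
        linarith
      have h1a0 : (0 : ℝ) ≤ 1 - α.1 := sub_nonneg.mpr (le_of_lt α.2.2)
      have hm := hmain α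
      have h2 : (1 - α.1) * (B + I) ≤ δ := by
        calc (1 - α.1) * (B + I) ≤ (δ / (B + I)) * (B + I) :=
              mul_le_mul_of_nonneg_right h1a (le_of_lt htpos)
          _ = δ := div_mul_cancel₀ δ (ne_of_gt htpos)
      nlinarith [hIg0, hBnn]
  -- choose a sample size with `ε n` below the positive infimum OOD risk
  obtain ⟨n, hεlt, hn1⟩ :=
    ((htend.eventually (gt_mem_nhds hinf)).and (Filter.eventually_ge_atTop 1)).exists
  letI := hprob n
  letI := D.probO
  have hbddO : BddBelow (Set.range fun h : H => riskOut ℓ D h.1) := by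
    refine ⟨0, ?_⟩
    rintro _ ⟨h, rfl⟩
    exact aux_riskOut_nonneg hl_nonneg _ _
  have hA : ∀ S, Measurable (A n S) ∧ ∀ z, A n S z ∈ Set.Icc 1 (K + 1) :=
    fun S => hH _ (hmemH n hn1 S)
  have hFsum : ∀ S : Fin n → ↥X × ℕ, riskOut ℓ D (A n S)
      = ∑ p ∈ s, (D.DO {p}).toReal * ℓ (A n S p.1) (K + 1) :=
    fun S => aux_riskOut_sum (hA S).1 (hA S).2 hl_nonneg hB₀ D hsO
  have hterm : ∀ p ∈ s,
      Integrable (fun S : Fin n → ↥X × ℕ => (D.DO {p}).toReal * ℓ (A n S p.1) (K + 1))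
        (sampleMeasure D n) ∧
      ∫ S, (D.DO {p}).toReal * ℓ (A n S p.1) (K + 1) ∂(sampleMeasure D n)
        ≤ (D.DO {p}).toReal * ε n := by
    intro p hp
    by_cases hz : D.DO {p} = 0
    · constructor
      · simpa [hz] using (integrable_const (0 : ℝ) (μ := sampleMeasure D n))
      · simp [hz]
    · have hppos : 0 < D.DO {p} := lt_of_le_of_ne (zero_le) (Ne.symm hz)
      have hp2 : p.2 = K + 1 := by
        by_contra hne
        apply hz
        have hsub : ({p} : Set (↥X × ℕ)) ⊆ {q : ↥X × ℕ | q.2 ≠ K + 1} := by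
          intro q hq
          rw [Set.mem_singleton_iff] at hq
          subst hq
          exact hne
        exact le_antisymm (le_trans (measure_mono hsub) (le_of_eq D.suppO)) (zero_le)
      have hx : 0 < D.DO {(p.1, K + 1)} := by
        have hpe : (p.1, K + 1) = p := by rw [← hp2]
        rw [hpe]
        exact hppos
      obtain ⟨hgm, hgI⟩ := key p.1 hx n hn1
      have hgint : Integrable (fun S : Fin n → ↥X × ℕ => ℓ (A n S p.1) (K + 1))
          (sampleMeasure D n) :=
        ⟨hgm.aestronglyMeasurable, HasFiniteIntegral.of_bounded (C := B)
          (Filter.Eventually.of_forall fun S => by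
            rw [Real.norm_eq_abs, abs_of_nonneg (hl_nonneg _ _)]
            exact hB _ ((hA S).2 _) _ hKmem)⟩
      refine ⟨hgint.const_mul _, ?_⟩
      rw [integral_const_mul]
      exact mul_le_mul_of_nonneg_left hgI ENNReal.toReal_nonneg
  have hFeq : (fun S : Fin n → ↥X × ℕ => riskOut ℓ D (A n S))
      = fun S => ∑ p ∈ s, (D.DO {p}).toReal * ℓ (A n S p.1) (K + 1) := funext hFsum
  have hFint : Integrable (fun S : Fin n → ↥X × ℕ => riskOut ℓ D (A n S))
      (sampleMeasure D n) := by
    rw [hFeq]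
    exact integrable_finset_sum s fun p hp => (hterm p hp).1
  have hc_le : (⨅ h : H, riskOut ℓ D h.1)
      ≤ ∫ S, riskOut ℓ D (A n S) ∂(sampleMeasure D n) := by
    have h1 : ∀ S : Fin n → ↥X × ℕ, (⨅ h : H, riskOut ℓ D h.1) ≤ riskOut ℓ D (A n S) :=
      fun S => ciInf_le hbddO ⟨A n S, hmemH n hn1 S⟩
    calc (⨅ h : H, riskOut ℓ D h.1)
        = ∫ _S, (⨅ h : H, riskOut ℓ D h.1) ∂(sampleMeasure D n) := by
          simp [measure_univ]
      _ ≤ _ := integral_mono (integrable_const _) hFint h1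
  have hsum1 : ∑ p ∈ s, (D.DO {p}).toReal ≤ 1 := by
    have hdisj : (↑s : Set (↥X × ℕ)).PairwiseDisjoint (fun p => ({p} : Set (↥X × ℕ))) := by
      intro a _ b _ hab
      simpa [Function.onFun, Set.disjoint_singleton] using hab
    have hsum : ∑ p ∈ s, D.DO {p} = D.DO (⋃ p ∈ s, ({p} : Set (↥X × ℕ))) :=
      (measure_biUnion_finset hdisj fun p _ => measurableSet_singleton p).symm
    have hU : (⋃ p ∈ s, ({p} : Set (↥X × ℕ))) = ↑s := Set.biUnion_of_singleton _
    have hle1 : ∑ p ∈ s, D.DO {p} ≤ 1 := by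
      rw [hsum, hU]
      exact prob_le_one
    calc ∑ p ∈ s, (D.DO {p}).toReal
        = (∑ p ∈ s, D.DO {p}).toReal := (ENNReal.toReal_sum fun p _ => measure_ne_top _ _).symm
      _ ≤ (1 : ℝ≥0∞).toReal := ENNReal.toReal_mono ENNReal.one_ne_top hle1
      _ = 1 := by simp
  have hsum_le : ∫ S, riskOut ℓ D (A n S) ∂(sampleMeasure D n) ≤ ε n := by
    rw [hFeq, integral_finset_sum s fun p hp => (hterm p hp).1]
    calc ∑ p ∈ s, ∫ S, (D.DO {p}).toReal * ℓ (A n S p.1) (K + 1) ∂(sampleMeasure D n)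
        ≤ ∑ p ∈ s, (D.DO {p}).toReal * ε n := Finset.sum_le_sum fun p hp => (hterm p hp).2
      _ = (∑ p ∈ s, (D.DO {p}).toReal) * ε n := by rw [Finset.sum_mul]
      _ ≤ 1 * ε n := mul_le_mul_of_nonneg_right hsum1 (hε0 n)
      _ = ε n := one_mul _
  exact absurd (le_trans hc_le hsum_le) (not_le.mpr hεlt)

end OODF

end
end

section
/- Let D be a probability measure on a measurable space X and let C₁,…,C_r be measurable sets covering X (⋃_{i=1}^r C_i = X). For an i.i.d. sample S = (x₁,…,x_n) drawn from D^n, E_{S ~ D^n}[ Σ_{i : C_i ∩ {x₁,…,x_n} = ∅} D(C_i) ] ≤ r/(e·n), where e is Euler's number and the sum ranges over those indices i for which no sample point lies in C_i. -/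
open MeasureTheory

lemma key_bound (p : ℝ) (hp0 : 0 ≤ p) (hp1 : p ≤ 1) (n : ℕ) (hn : 1 ≤ n) :
    p * (1 - p) ^ n ≤ 1 / (Real.exp 1 * n) := by
  have hn0 : (0:ℝ) < n := by exact_mod_cast hn
  have h1 : 1 - p ≤ Real.exp (-p) := by
    have := Real.add_one_le_exp (-p); linarith
  have h2 : (1 - p) ^ n ≤ Real.exp (-p) ^ n :=
    pow_le_pow_left₀ (by linarith) h1 n
  have h3 : Real.exp (-p) ^ n = Real.exp (-(p * n)) := by
    rw [← Real.exp_nat_mul]; ring_nf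
  have h4 : p * n ≤ Real.exp (p * n - 1) := by
    have := Real.add_one_le_exp (p * n - 1); linarith
  have h5 : p * (1 - p) ^ n ≤ p * Real.exp (-(p * n)) := by
    apply mul_le_mul_of_nonneg_left _ hp0
    rw [← h3]; exact h2
  have hepos : 0 < Real.exp (-(p * n)) := Real.exp_pos _
  have h6 : p * Real.exp (-(p * n)) ≤ 1 / (Real.exp 1 * n) := by
    rw [le_div_iff₀ (by positivity)]
    have : p * n * Real.exp (-(p * n)) ≤ Real.exp (p * n - 1) * Real.exp (-(p * n)) :=
      mul_le_mul_of_nonneg_right h4 hepos.le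
    rw [← Real.exp_add] at this
    have heq : p * n - 1 + -(p * n) = -1 := by ring
    rw [heq] at this
    have hee : Real.exp (-1) * Real.exp 1 = 1 := by
      rw [← Real.exp_add]; norm_num
    nlinarith [Real.exp_pos (1:ℝ)]
  linarith


/-- Lemma 5 / `L14` of the paper, motivated by Lemma 19.2 of
Shalev-Shwartz & Ben-David.  Let `D` be a probability measure on `X` and let
`C₁,…,C_r` be measurable sets covering `X`.  For an i.i.d. sample `S = (x₁,…,x_n)` drawn
from `D^n`, the expected total `D`-mass of the cells not hit by the sample is at most
`r / (e·n)`. -/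
theorem stmt18 {α : Type*} [MeasurableSpace α] (D : Measure α) [IsProbabilityMeasure D]
    (r : ℕ) (C : Fin r → Set α) (hCmeas : ∀ i, MeasurableSet (C i))
    (hcover : ⋃ i, C i = Set.univ) (n : ℕ) (hn : 1 ≤ n) :
    ∫ S : Fin n → α,
        (∑ i : Fin r,
          Set.indicator {S' : Fin n → α | ∀ j, S' j ∉ C i}
            (fun _ => (D (C i)).toReal) S)
      ∂(Measure.pi fun _ : Fin n => D) ≤ r / (Real.exp 1 * n) := by
  set μ := Measure.pi fun _ : Fin n => D with hμ
  have hAeq : ∀ i, {S' : Fin n → α | ∀ j, S' j ∉ C i}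
      = Set.pi Set.univ (fun _ : Fin n => (C i)ᶜ) := by
    intro i; ext S; simp [Set.mem_pi]
  have hAmeas : ∀ i, MeasurableSet {S' : Fin n → α | ∀ j, S' j ∉ C i} := by
    intro i; rw [hAeq i]
    exact MeasurableSet.univ_pi (fun _ => (hCmeas i).compl)
  have hint : ∀ i : Fin r, Integrable
      (Set.indicator {S' : Fin n → α | ∀ j, S' j ∉ C i}
        (fun _ => (D (C i)).toReal)) μ :=
    fun i => (integrable_const _).indicator (hAmeas i)
  rw [integral_finset_sum _ (fun i _ => hint i)]
  have hterm : ∀ i : Fin r,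
      ∫ S, Set.indicator {S' : Fin n → α | ∀ j, S' j ∉ C i}
        (fun _ => (D (C i)).toReal) S ∂μ
      = (D (C i)).toReal * (1 - (D (C i)).toReal) ^ n := by
    intro i
    rw [integral_indicator_const _ (hAmeas i), hAeq i, hμ, measureReal_def, Measure.pi_pi]
    have hle : D (C i) ≤ 1 := prob_le_one
    have hcompl : D ((C i)ᶜ) = 1 - D (C i) := by
      rw [measure_compl (hCmeas i) (measure_ne_top _ _), measure_univ]
    rw [Finset.prod_const, hcompl]
    have : ((1 - D (C i)) ^ n).toReal = (1 - (D (C i)).toReal) ^ n := by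
      rw [ENNReal.toReal_pow, ENNReal.toReal_sub_of_le hle ENNReal.one_ne_top,
        ENNReal.toReal_one]
    simp [this, Finset.card_univ, mul_comm]
  calc ∑ i : Fin r, ∫ S, Set.indicator {S' : Fin n → α | ∀ j, S' j ∉ C i}
          (fun _ => (D (C i)).toReal) S ∂μ
      = ∑ i : Fin r, (D (C i)).toReal * (1 - (D (C i)).toReal) ^ n := by
        exact Finset.sum_congr rfl (fun i _ => hterm i)
    _ ≤ ∑ _i : Fin r, 1 / (Real.exp 1 * n) := by
        apply Finset.sum_le_sum
        intro i _
        exact key_bound _ ENNReal.toReal_nonneg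
          (by
            have := (ENNReal.toReal_le_toReal (measure_ne_top D _) ENNReal.one_ne_top).mpr
              (prob_le_one (μ := D) (s := C i))
            simpa using this) n hn
    _ = r / (Real.exp 1 * n) := by
        rw [Finset.sum_const, Finset.card_univ, Fintype.card_fin, nsmul_eq_mul]
        ring
end
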